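/- arXiv:1907.04220 — 7 statements merged into one kernel-verified Lean document; each statement's English description precedes it below -/
import Mathlib

section
/- Let μ > 0, σ > 0, and let p ≥ μ be any price. Then the worst-case ratio of optimal revenue to the revenue of posting price p over (μ,σ)-distributed valuations is unbounded: for every M > 0 there exists F ∈ 𝔽_{μ,σ} such that OPT(F) > M·REV(p;F). -/
open MeasureTheory
open scoped ENNReal

/-- Revenue of posting price `p` against valuation distribution `F`:
`REV(p;F) = p · P(X ≥ p)`. -/
noncomputable def rev (F : Measure ℝ) (p : ℝ) : ℝ :=
  p * (F (Set.Ici p)).toReal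

/-- Optimal revenue `OPT(F) = sup_{p ≥ 0} p · P(X ≥ p)`. -/
noncomputable def opt (F : Measure ℝ) : ℝ :=
  ⨆ p ∈ Set.Ici (0 : ℝ), rev F p

/-- Revenue of a randomized pricing mechanism `A` (a measure over prices):
`REV(A;F) = E_{p∼A}[REV(p;F)]`. -/
noncomputable def mrev (A F : Measure ℝ) : ℝ :=
  ∫ p, rev F p ∂A

/-- `F` is a `(μ,σ)`-distributed distribution: a probability measure on `[0,∞)`
with mean `m` and variance at most `s²`. -/
structure MeanVarLe (F : Measure ℝ) (m s : ℝ) : Prop where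
  prob : IsProbabilityMeasure F
  supp : F (Set.Iio 0) = 0
  int_mean : Integrable (fun x => x) F
  int_sq : Integrable (fun x => x ^ 2) F
  mean : ∫ x, x ∂F = m
  var_le : ∫ x, (x - m) ^ 2 ∂F ≤ s ^ 2

/-- A randomized pricing mechanism: a probability measure over prices in `[0,∞)`. -/
def IsPriceMech (A : Measure ℝ) : Prop :=
  IsProbabilityMeasure A ∧ A (Set.Iio 0) = 0

/-- Any real function is integrable with respect to a Dirac measure. -/
lemma integrable_dirac_real (f : ℝ → ℝ) (a : ℝ) : Integrable f (Measure.dirac a) := by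
  have h : f =ᵐ[Measure.dirac a] (fun _ => f a) := by
    rw [MeasureTheory.ae_dirac_eq]
    exact Filter.eventually_pure.mpr rfl
  exact (integrable_const (f a)).congr h.symm

section TwoPoint

variable (c₁ c₂ ℓ t : ℝ)

/-- Two-point measure: mass `c₁` at `ℓ` and `c₂` at `t`. -/
noncomputable def twoPoint : Measure ℝ :=
  ENNReal.ofReal c₁ • Measure.dirac ℓ + ENNReal.ofReal c₂ • Measure.dirac t

lemma twoPoint_integrable (f : ℝ → ℝ) : Integrable f (twoPoint c₁ c₂ ℓ t) := by
  refine Integrable.add_measure ?_ ?_ <;>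
    exact ((integrable_dirac_real f _).smul_measure ENNReal.ofReal_ne_top)

lemma twoPoint_integral (h₁ : 0 ≤ c₁) (h₂ : 0 ≤ c₂) (f : ℝ → ℝ) :
    ∫ x, f x ∂(twoPoint c₁ c₂ ℓ t) = c₁ * f ℓ + c₂ * f t := by
  rw [twoPoint, integral_add_measure
      ((integrable_dirac_real f _).smul_measure ENNReal.ofReal_ne_top)
      ((integrable_dirac_real f _).smul_measure ENNReal.ofReal_ne_top),
    integral_smul_measure, integral_smul_measure, integral_dirac, integral_dirac,
    ENNReal.toReal_ofReal h₁, ENNReal.toReal_ofReal h₂, smul_eq_mul, smul_eq_mul]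

lemma twoPoint_apply (s : Set ℝ) :
    twoPoint c₁ c₂ ℓ t s
      = ENNReal.ofReal c₁ * (s.indicator 1 ℓ) + ENNReal.ofReal c₂ * (s.indicator 1 t) := by
  rw [twoPoint]
  simp [Measure.dirac_apply]

end TwoPoint

set_option maxHeartbeats 1000000 in
/-- For `μ, σ > 0` and any price `p ≥ μ`, the worst-case ratio of optimal
revenue to the revenue of posting `p` over `(μ,σ)`-distributed valuations is unbounded:
for every `M > 0` there is `F ∈ 𝔽_{μ,σ}` with `OPT(F) > M·REV(p;F)`. -/
theorem stmt1 (μ σ p : ℝ) (hμ : 0 < μ) (hσ : 0 < σ) (hp : μ ≤ p) :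
    ∀ M : ℝ, 0 < M → ∃ F : Measure ℝ, MeanVarLe F μ σ ∧ M * rev F p < opt F := by
  intro M hM
  -- choose a high price t, a small perturbation δ, low value ℓ, high-mass ε
  set t : ℝ := max (M * p + 1) (p + 1) with ht_def
  have hpt : p + 1 ≤ t := le_max_right _ _
  have hμt : μ + 1 ≤ t := le_trans (by linarith) hpt
  have htμ1 : (1 : ℝ) ≤ t - μ := by linarith
  have htμ0 : (0 : ℝ) < t - μ := by linarith
  have hMpt : M * p < t := lt_of_lt_of_le (by linarith) (le_max_left _ _)
  have hpltt : p < t := by linarith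
  have ht0 : 0 < t := by linarith
  set δ : ℝ := min (μ / 2) (min (σ / 2) (σ ^ 2 / (2 * (t - μ)))) with hδ_def
  have hδ0 : 0 < δ := by
    refine lt_min (by linarith) (lt_min (by linarith) ?_)
    positivity
  have hδμ : δ ≤ μ / 2 := min_le_left _ _
  have hδσ : δ ≤ σ / 2 := le_trans (min_le_right _ _) (min_le_left _ _)
  have hδv : δ ≤ σ ^ 2 / (2 * (t - μ)) := le_trans (min_le_right _ _) (min_le_right _ _)
  set ℓ : ℝ := μ - δ with hℓ_def
  have hℓ0 : 0 < ℓ := by simp only [hℓ_def]; linarith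
  have hℓt : ℓ < t := by simp only [hℓ_def]; linarith
  set ε : ℝ := δ / (t - ℓ) with hε_def
  have htℓ0 : 0 < t - ℓ := by linarith
  have hε0 : 0 < ε := div_pos hδ0 htℓ0
  have hε1 : ε < 1 := by
    rw [hε_def, div_lt_one htℓ0]
    simp only [hℓ_def]; linarith
  have hεtℓ : ε * (t - ℓ) = δ := by
    rw [hε_def]; exact div_mul_cancel₀ _ (ne_of_gt htℓ0)
  set F : Measure ℝ := twoPoint (1 - ε) ε ℓ t with hF_def
  have h1ε : (0:ℝ) ≤ 1 - ε := by linarith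
  have hεn : (0:ℝ) ≤ ε := le_of_lt hε0
  -- measure of Ici q
  have hIci : ∀ q : ℝ, q ≤ ℓ → F (Set.Ici q) = 1 := by
    intro q hq
    rw [hF_def, twoPoint_apply]
    rw [Set.indicator_of_mem (Set.mem_Ici.mpr hq) (1 : ℝ → ℝ≥0∞),
      Set.indicator_of_mem (Set.mem_Ici.mpr (le_trans hq (le_of_lt hℓt))) (1 : ℝ → ℝ≥0∞)]
    simp only [Pi.one_apply, mul_one]
    rw [← ENNReal.ofReal_add h1ε hεn]
    norm_num
  have hIci2 : ∀ q : ℝ, ℓ < q → q ≤ t → F (Set.Ici q) = ENNReal.ofReal ε := by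
    intro q h1 h2
    rw [hF_def, twoPoint_apply]
    rw [Set.indicator_of_notMem (fun h => absurd (Set.mem_Ici.mp h) (not_le.mpr h1)) (1 : ℝ → ℝ≥0∞),
      Set.indicator_of_mem (Set.mem_Ici.mpr h2) (1 : ℝ → ℝ≥0∞)]
    simp
  have hIci3 : ∀ q : ℝ, t < q → F (Set.Ici q) = 0 := by
    intro q h1
    rw [hF_def, twoPoint_apply]
    rw [Set.indicator_of_notMem (fun h => absurd (Set.mem_Ici.mp h) (not_le.mpr (lt_trans hℓt h1))) (1 : ℝ → ℝ≥0∞),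
      Set.indicator_of_notMem (fun h => absurd (Set.mem_Ici.mp h) (not_le.mpr h1)) (1 : ℝ → ℝ≥0∞)]
    simp
  have hmeas_le_one : ∀ s : Set ℝ, (F s).toReal ≤ 1 := by
    intro s
    rw [hF_def, twoPoint_apply]
    have h1 : (Set.indicator s 1 ℓ : ℝ≥0∞) ≤ 1 := Set.indicator_le_self' (by simp) ℓ
    have h2 : (Set.indicator s 1 t : ℝ≥0∞) ≤ 1 := Set.indicator_le_self' (by simp) t
    have : ENNReal.ofReal (1 - ε) * (s.indicator 1 ℓ) + ENNReal.ofReal ε * (s.indicator 1 t)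
        ≤ ENNReal.ofReal (1 - ε) + ENNReal.ofReal ε := by
      calc ENNReal.ofReal (1 - ε) * (s.indicator 1 ℓ) + ENNReal.ofReal ε * (s.indicator 1 t)
          ≤ ENNReal.ofReal (1 - ε) * 1 + ENNReal.ofReal ε * 1 := by
            exact add_le_add (mul_le_mul_right h1 _) (mul_le_mul_right h2 _)
        _ = ENNReal.ofReal (1 - ε) + ENNReal.ofReal ε := by rw [mul_one, mul_one]
    calc (ENNReal.ofReal (1 - ε) * (s.indicator 1 ℓ)
          + ENNReal.ofReal ε * (s.indicator 1 t)).toReal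
        ≤ (ENNReal.ofReal (1 - ε) + ENNReal.ofReal ε).toReal := by
          exact ENNReal.toReal_mono (by finiteness) this
      _ = 1 := by rw [← ENNReal.ofReal_add h1ε hεn]; norm_num
  have hmvl : MeanVarLe F μ σ := by
    constructor
    · constructor
      rw [hF_def, twoPoint_apply]
      simp only [Set.indicator_univ, Pi.one_apply, mul_one]
      rw [← ENNReal.ofReal_add h1ε hεn]
      norm_num
    · rw [hF_def, twoPoint_apply]
      rw [Set.indicator_of_notMem (by simp only [Set.mem_Iio, not_lt]; linarith) (1 : ℝ → ℝ≥0∞),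
        Set.indicator_of_notMem (by simp only [Set.mem_Iio, not_lt]; linarith) (1 : ℝ → ℝ≥0∞)]
      simp
    · exact twoPoint_integrable _ _ _ _ _
    · exact twoPoint_integrable _ _ _ _ _
    · rw [hF_def, twoPoint_integral _ _ _ _ h1ε hεn]
      have : (1 - ε) * ℓ + ε * t = ℓ + ε * (t - ℓ) := by ring
      rw [this, hεtℓ]
      simp [hℓ_def]
    · rw [hF_def, twoPoint_integral _ _ _ _ h1ε hεn]
      have e1 : (ℓ - μ) ^ 2 = δ ^ 2 := by rw [hℓ_def]; ring
      have e2 : ε * (t - μ) ^ 2 ≤ δ * (t - μ) := by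
        have : ε * (t - μ) ≤ δ := by
          calc ε * (t - μ) ≤ ε * (t - ℓ) := by
                have : t - μ ≤ t - ℓ := by rw [hℓ_def]; linarith
                nlinarith
            _ = δ := hεtℓ
        nlinarith
      have e3 : δ * (t - μ) ≤ σ ^ 2 / 2 := by
        have hne : t - μ ≠ 0 := ne_of_gt htμ0
        calc δ * (t - μ) ≤ σ ^ 2 / (2 * (t - μ)) * (t - μ) :=
              mul_le_mul_of_nonneg_right hδv (le_of_lt htμ0)
          _ = σ ^ 2 / 2 := by field_simp
      have e4 : δ ^ 2 ≤ σ ^ 2 / 4 := by nlinarith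
      calc (1 - ε) * (ℓ - μ) ^ 2 + ε * (t - μ) ^ 2
          ≤ (ℓ - μ) ^ 2 + ε * (t - μ) ^ 2 := by nlinarith
        _ ≤ σ ^ 2 / 4 + σ ^ 2 / 2 := by rw [e1]; linarith
        _ ≤ σ ^ 2 := by nlinarith [sq_nonneg σ]
  refine ⟨F, hmvl, ?_⟩
  have hℓp : ℓ < p := by rw [hℓ_def]; linarith
  have hrevp : rev F p = p * ε := by
    rw [rev, hIci2 p hℓp (le_of_lt hpltt), ENNReal.toReal_ofReal hεn]
  have hrevt : rev F t = t * ε := by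
    rw [rev, hIci2 t hℓt le_rfl, ENNReal.toReal_ofReal hεn]
  have hbdd : ∀ q : ℝ, (⨆ _ : q ∈ Set.Ici (0:ℝ), rev F q) ≤ t := by
    intro q
    rcases le_or_gt q t with h | h
    · refine Real.iSup_le (fun hq => ?_) (le_of_lt ht0)
      have hq0 : 0 ≤ q := hq
      calc rev F q = q * (F (Set.Ici q)).toReal := rfl
        _ ≤ q * 1 := mul_le_mul_of_nonneg_left (hmeas_le_one _) hq0
        _ ≤ t := by rw [mul_one]; exact h
    · refine Real.iSup_le (fun hq => ?_) (le_of_lt ht0)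
      rw [rev, hIci3 q h]
      simp [le_of_lt ht0]
  have hle : rev F t ≤ opt F := by
    rw [opt]
    have heq : (⨆ _ : t ∈ Set.Ici (0:ℝ), rev F t) = rev F t :=
      ciSup_pos (Set.mem_Ici.mpr (le_of_lt ht0))
    rw [← heq]
    refine le_ciSup (f := fun q : ℝ => ⨆ _ : q ∈ Set.Ici (0:ℝ), rev F q) ⟨t, ?_⟩ t
    rintro x ⟨q, rfl⟩
    exact hbdd q
  calc M * rev F p = (M * p) * ε := by rw [hrevp]; ring
    _ < t * ε := by nlinarith
    _ = rev F t := hrevt.symm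
    _ ≤ opt F := hle
end

section
/- Let μ > 0, σ ≥ 0 and let 0 < p < μ. Then for every (μ,σ)-distributed distribution F (i.e., every nonnegative random variable X with E[X] = μ and Var(X) ≤ σ²), the optimal revenue satisfies OPT(F) ≤ max{ 1 + σ²/(μ−p)², μ/p + σ²/(p(μ−p)) } · p·P(X ≥ p). -/
open MeasureTheory

lemma my_cs (ν : Measure ℝ) [IsFiniteMeasure ν] (g : ℝ → ℝ)
    (hg : Integrable g ν) (hg2 : Integrable (fun x => g x ^ 2) ν) :
    (∫ x, g x ∂ν) ^ 2 ≤ (∫ x, g x ^ 2 ∂ν) * (ν Set.univ).toReal := by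
  set m := (ν Set.univ).toReal with hm
  set I := ∫ x, g x ∂ν with hI
  have hmnn : 0 ≤ m := ENNReal.toReal_nonneg
  rcases eq_or_lt_of_le hmnn with h0 | hpos
  · have hν : ν = 0 := by
      have h1 := measure_ne_top ν Set.univ
      have h2 : ν Set.univ = 0 := by
        rcases (ENNReal.toReal_eq_zero_iff _).mp h0.symm with h | h
        · exact h
        · exact absurd h h1
      exact Measure.measure_univ_eq_zero.mp h2
    simp [hν, hI]
  · have key : 0 ≤ ∫ x, (m * g x - I) ^ 2 ∂ν :=
      integral_nonneg fun x => sq_nonneg _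
    have hexp : ∫ x, (m * g x - I) ^ 2 ∂ν
        = m ^ 2 * (∫ x, g x ^ 2 ∂ν) - 2 * m * I * I + I ^ 2 * m := by
      have h1 : Integrable (fun x => m ^ 2 * g x ^ 2) ν := hg2.const_mul _
      have h2 : Integrable (fun x => 2 * m * I * g x) ν := hg.const_mul _
      have h12 : Integrable (fun x => m ^ 2 * g x ^ 2 - 2 * m * I * g x) ν := h1.sub h2
      have h3 : Integrable (fun x => (I : ℝ) ^ 2) ν := integrable_const _
      have heq : (fun x => (m * g x - I) ^ 2)
          = fun x => (m ^ 2 * g x ^ 2 - 2 * m * I * g x) + I ^ 2 := by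
        funext x; ring
      rw [heq, integral_add h12 h3, integral_sub h1 h2,
        integral_const, integral_const_mul, integral_const_mul]
      simp [measureReal_def, ← hI, ← hm]
      ring
    nlinarith [key, hexp]

set_option maxHeartbeats 2000000 in
/-- For `μ > 0`, `σ ≥ 0`, `0 < p < μ`, and any `(μ,σ)`-distributed `F`,
`OPT(F) ≤ max{1 + σ²/(μ−p)², μ/p + σ²/(p(μ−p))} · p·P(X ≥ p)`. -/
theorem stmt2 (μ σ p : ℝ) (hμ : 0 < μ) (hσ : 0 ≤ σ) (hp0 : 0 < p) (hpμ : p < μ)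
    (F : Measure ℝ) (hF : MeanVarLe F μ σ) :
    opt F ≤ max (1 + σ ^ 2 / (μ - p) ^ 2) (μ / p + σ ^ 2 / (p * (μ - p))) * rev F p := by
  obtain ⟨hprob, hsupp, hint1, hint2, hmean, hvar⟩ := hF
  haveI := hprob
  have hd : (0:ℝ) < μ - p := by linarith
  -- the centered variable
  set g : ℝ → ℝ := fun x => x - μ with hg
  have hintg : Integrable g F := hint1.sub (integrable_const μ)
  have hintg2 : Integrable (fun x => g x ^ 2) F := by
    have : (fun x => g x ^ 2) = fun x => x ^ 2 - (2*μ)*x + μ^2 := by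
      funext x; simp [hg]; ring
    rw [this]
    exact (hint2.sub (hint1.const_mul _)).add (integrable_const _)
  set r := (F (Set.Ici p)).toReal with hr
  set r' := (F (Set.Iio p)).toReal with hr'
  have hrnn : 0 ≤ r := ENNReal.toReal_nonneg
  have hr'nn : 0 ≤ r' := ENNReal.toReal_nonneg
  have hsum : r + r' = 1 := by
    have h1 : F (Set.Iio p) = 1 - F (Set.Ici p) := by
      rw [← Set.compl_Ici, prob_compl_eq_one_sub measurableSet_Ici]
    have h2 : F (Set.Ici p) ≤ 1 := prob_le_one
    rw [hr, hr', h1, ENNReal.toReal_sub_of_le h2 (by simp)]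
    simp
  set s := ∫ x in Set.Ici p, g x ∂F with hs
  -- split of mean-0 integral
  have hg0 : ∫ x, g x ∂F = 0 := by
    rw [hg]
    rw [integral_sub hint1 (integrable_const μ), hmean]
    simp
  have hsplitg : s + ∫ x in Set.Iio p, g x ∂F = 0 := by
    rw [hs, ← Set.compl_Ici]
    rw [integral_add_compl measurableSet_Ici hintg]
    exact hg0
  have hlowint : ∫ x in Set.Iio p, g x ∂F = -s := by linarith
  -- s ≥ (μ - p) * r'
  have ha : (μ - p) * r' ≤ s := by
    have hmono : ∫ x in Set.Iio p, g x ∂F ≤ ∫ x in Set.Iio p, (p - μ) ∂F := by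
      apply setIntegral_mono_on hintg.integrableOn
        integrableOn_const measurableSet_Iio
      intro x hx
      simp only [hg]
      have : x < p := hx
      linarith
    rw [hlowint, setIntegral_const] at hmono
    simp only [smul_eq_mul] at hmono
    rw [measureReal_def, ← hr'] at hmono
    linarith [hmono]
  -- Cauchy–Schwarz on both sides
  set vA := ∫ x in Set.Ici p, g x ^ 2 ∂F with hvA
  set vC := ∫ x in Set.Iio p, g x ^ 2 ∂F with hvC
  have hvAnn : 0 ≤ vA := integral_nonneg fun x => sq_nonneg _
  have hvCnn : 0 ≤ vC := integral_nonneg fun x => sq_nonneg _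
  have hcs1 : s ^ 2 ≤ vA * r := by
    have := my_cs (F.restrict (Set.Ici p)) g hintg.restrict hintg2.restrict
    rwa [Measure.restrict_apply_univ] at this
  have hcs2 : s ^ 2 ≤ vC * r' := by
    have := my_cs (F.restrict (Set.Iio p)) g hintg.restrict hintg2.restrict
    rw [Measure.restrict_apply_univ, ← hr', hlowint] at this
    simpa using this
  have hvsum : vA + vC ≤ σ ^ 2 := by
    have : vA + vC = ∫ x, g x ^ 2 ∂F := by
      rw [hvA, hvC, ← Set.compl_Ici, integral_add_compl measurableSet_Ici hintg2]
    rw [this]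
    exact hvar
  clear_value s r r' vA vC
  -- combined second-moment bound
  have hs2 : s ^ 2 ≤ σ ^ 2 * r * r' := by
    nlinarith [mul_le_mul_of_nonneg_right hcs1 hr'nn,
      mul_le_mul_of_nonneg_right hcs2 hrnn,
      mul_le_mul_of_nonneg_right (mul_le_mul_of_nonneg_right hvsum hrnn) hr'nn]
  -- Cantelli
  have hCantelli : (μ - p) ^ 2 ≤ r * ((μ - p) ^ 2 + σ ^ 2) := by
    rcases eq_or_lt_of_le hr'nn with h0 | hpos
    · nlinarith
    · have h1 : ((μ - p) * r') ^ 2 ≤ s ^ 2 := by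
        nlinarith [mul_nonneg hd.le hr'nn]
      have h2 : (μ - p) ^ 2 * r' ≤ σ ^ 2 * r := by
        have h3 : ((μ - p) ^ 2 * r') * r' ≤ (σ ^ 2 * r) * r' := by nlinarith
        exact le_of_mul_le_mul_right h3 hpos
      have h4 : (μ - p) ^ 2 * (r + r') = (μ - p) ^ 2 := by rw [hsum]; ring
      linarith
  -- tail first-moment bound
  have hS : s * (μ - p) ≤ σ ^ 2 * r := by
    rcases eq_or_lt_of_le hr'nn with h0 | hpos
    · have hs0 : s = 0 := by
        have h4 : s ^ 2 ≤ 0 := by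
          have := hcs2
          rw [← h0] at this
          linarith [this]
        have h5 := sq_nonneg s
        have h6 : s ^ 2 = 0 := le_antisymm h4 h5
        exact pow_eq_zero_iff (by norm_num) |>.mp h6
      rw [hs0]
      have : 0 ≤ σ ^ 2 * r := by positivity
      linarith
    · have hspos : 0 < s := lt_of_lt_of_le (mul_pos hd hpos) ha
      have h4 : (s * (μ - p)) * r' ≤ (σ ^ 2 * r) * r' := by
        have h5 := mul_le_mul_of_nonneg_left ha hspos.le
        nlinarith [h5, hs2]
      exact le_of_mul_le_mul_right h4 hpos
  -- nonnegativity a.e.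
  have haeg : ∀ᵐ x ∂F, 0 ≤ x := by
    rw [ae_iff]
    convert hsupp using 2
    ext x
    simp
  -- tail expectation
  have htail : ∫ x in Set.Ici p, x ∂F = s + μ * r := by
    have : ∫ x in Set.Ici p, x ∂F = ∫ x in Set.Ici p, (g x + μ) ∂F := by
      apply setIntegral_congr_fun measurableSet_Ici
      intro x _; simp [hg]
    rw [this, integral_add hintg.integrableOn
      integrableOn_const, setIntegral_const]
    simp [measureReal_def, ← hs, ← hr]
    ring
  -- the pointwise revenue bound
  have hmain : ∀ q : ℝ, 0 ≤ q →
      rev F q ≤ max (1 + σ ^ 2 / (μ - p) ^ 2) (μ / p + σ ^ 2 / (p * (μ - p))) * rev F p := by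
    intro q hq
    have hrevp : rev F p = p * r := by rw [rev, hr]
    rcases le_or_gt q p with hqp | hqp
    · -- q ≤ p : rev q ≤ q ≤ p ≤ C1 * p * r
      have h1 : rev F q ≤ q := by
        rw [rev]
        have : (F (Set.Ici q)).toReal ≤ 1 := by
          have h := ENNReal.toReal_mono ENNReal.one_ne_top
            (prob_le_one (μ := F) (s := Set.Ici q))
          simpa using h
        nlinarith
      have h2 : p ≤ (1 + σ ^ 2 / (μ - p) ^ 2) * (p * r) := by
        have heq : (1 + σ ^ 2 / (μ - p) ^ 2) * (p * r)
            = ((μ - p) ^ 2 + σ ^ 2) * (p * r) / (μ - p) ^ 2 := by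
          field_simp
        rw [heq, le_div_iff₀ (by positivity)]
        nlinarith [mul_le_mul_of_nonneg_left hCantelli hp0.le]
      calc rev F q ≤ p := le_trans h1 hqp
        _ ≤ (1 + σ ^ 2 / (μ - p) ^ 2) * (p * r) := h2
        _ ≤ max (1 + σ ^ 2 / (μ - p) ^ 2) (μ / p + σ ^ 2 / (p * (μ - p))) * rev F p := by
            rw [hrevp]
            apply mul_le_mul_of_nonneg_right (le_max_left _ _) (by positivity)
    · -- q > p
      have h1 : rev F q ≤ ∫ x in Set.Ici q, x ∂F := by
        rw [rev]
        have hle : ∀ x ∈ Set.Ici q, q ≤ x := fun x hx => hx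
        have := setIntegral_mono_on
          integrableOn_const
          hint1.integrableOn measurableSet_Ici hle
        rwa [setIntegral_const, smul_eq_mul, measureReal_def, mul_comm] at this
      have h2 : ∫ x in Set.Ici q, x ∂F ≤ ∫ x in Set.Ici p, x ∂F := by
        apply setIntegral_mono_set hint1.integrableOn
          (ae_restrict_of_ae haeg)
        exact HasSubset.Subset.eventuallyLE (Set.Ici_subset_Ici.mpr hqp.le)
      have h3 : s + μ * r ≤ (μ / p + σ ^ 2 / (p * (μ - p))) * (p * r) := by
        have hexpand : (μ / p + σ ^ 2 / (p * (μ - p))) * (p * r)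
            = μ * r + σ ^ 2 * r / (μ - p) := by
          field_simp
        rw [hexpand]
        have : s ≤ σ ^ 2 * r / (μ - p) := by
          rw [le_div_iff₀ hd]
          linarith
        linarith
      calc rev F q ≤ ∫ x in Set.Ici p, x ∂F := le_trans h1 h2
        _ = s + μ * r := htail
        _ ≤ (μ / p + σ ^ 2 / (p * (μ - p))) * (p * r) := h3
        _ ≤ max (1 + σ ^ 2 / (μ - p) ^ 2) (μ / p + σ ^ 2 / (p * (μ - p))) * rev F p := by
            rw [hrevp]
            apply mul_le_mul_of_nonneg_right (le_max_right _ _) (by positivity)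
  -- conclude via sup
  have hRHS : 0 ≤ max (1 + σ ^ 2 / (μ - p) ^ 2) (μ / p + σ ^ 2 / (p * (μ - p))) * rev F p := by
    apply mul_nonneg
    · exact le_trans (by positivity) (le_max_left _ _)
    · exact mul_nonneg hp0.le ENNReal.toReal_nonneg
  rw [opt]
  apply Real.iSup_le _ hRHS
  intro q
  apply Real.iSup_le _ hRHS
  intro hq
  exact hmain q hq
end

section
/- Let μ > 0 and σ > 0, and set r = σ/μ. Then: (i) the equation (ρ−1)³/(2ρ−1)² = r² has a unique solution ρ in [1,∞); (ii) the equation (μ−p)³/(2p−μ) = σ² has a unique solution p* in (μ/2, μ), and p* = ρ·μ/(2ρ−1); (iii) the infimum inf_{0 < p < μ} max{ 1 + σ²/(μ−p)², μ/p + σ²/(p(μ−p)) } equals ρ and is attained at p = p*. -/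
set_option maxHeartbeats 1000000


lemma rho_mono {a b : ℝ} (ha : 1 ≤ a) (hab : a < b) :
    (a - 1) ^ 3 / (2 * a - 1) ^ 2 < (b - 1) ^ 3 / (2 * b - 1) ^ 2 := by
  have h1 : (0:ℝ) < (2 * a - 1) ^ 2 := by nlinarith
  have h2 : (0:ℝ) < (2 * b - 1) ^ 2 := by nlinarith
  rw [div_lt_div_iff₀ h1 h2]
  have hx : 0 ≤ a - 1 := by linarith
  have hxy : a - 1 < b - 1 := by linarith
  have t1 : 0 ≤ (a-1)^2 * (b-1)^2 * ((b-1) - (a-1)) :=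
    mul_nonneg (mul_nonneg (sq_nonneg _) (sq_nonneg _)) (by linarith)
  have t2 : 0 ≤ (a-1) * (b-1) * (((b-1)+(a-1)) * ((b-1)-(a-1))) :=
    mul_nonneg (mul_nonneg hx (by linarith)) (mul_nonneg (by linarith) (by linarith))
  have t3 : (a-1)^3 < (b-1)^3 := by
    have := pow_lt_pow_left₀ hxy hx (by norm_num : (3:ℕ) ≠ 0)
    simpa using this
  nlinarith [t1, t2, t3]

lemma rho_exists {s : ℝ} (hs : 0 ≤ s) :
    ∃ ρ : ℝ, 1 ≤ ρ ∧ (ρ - 1) ^ 3 / (2 * ρ - 1) ^ 2 = s := by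
  have hM : (1:ℝ) ≤ 4 * s + 2 := by nlinarith
  have hc : ContinuousOn (fun x : ℝ => (x - 1) ^ 3 / (2 * x - 1) ^ 2)
      (Set.Icc 1 (4 * s + 2)) := by
    apply ContinuousOn.div (by fun_prop) (by fun_prop)
    intro x hx
    have h1 := hx.1
    exact pow_ne_zero _ (by nlinarith)
  have hiv := intermediate_value_Icc hM hc
  have hmem : s ∈ Set.Icc ((fun x : ℝ => (x - 1) ^ 3 / (2 * x - 1) ^ 2) 1)
      ((fun x : ℝ => (x - 1) ^ 3 / (2 * x - 1) ^ 2) (4 * s + 2)) := by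
    constructor
    · simp
      positivity
    · simp only
      rw [le_div_iff₀ (by nlinarith)]
      nlinarith
  obtain ⟨ρ, hρ, hfρ⟩ := hiv hmem
  exact ⟨ρ, hρ.1, hfρ⟩

lemma p_anti {μ a b : ℝ} (ha : μ / 2 < a) (hab : a < b) (hb : b < μ) :
    (μ - b) ^ 3 / (2 * b - μ) < (μ - a) ^ 3 / (2 * a - μ) := by
  have h1 : (0:ℝ) < 2 * a - μ := by linarith
  have h2 : (0:ℝ) < 2 * b - μ := by linarith
  rw [div_lt_div_iff₀ h2 h1]
  have hmb : 0 < μ - b := by linarith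
  have h3 : (μ - b)^3 ≤ (μ - a)^3 := pow_le_pow_left₀ hmb.le (by linarith) 3
  calc (μ-b)^3*(2*a-μ) < (μ-b)^3*(2*b-μ) := by
        apply mul_lt_mul_of_pos_left (by linarith) (by positivity)
    _ ≤ (μ-a)^3*(2*b-μ) := mul_le_mul_of_nonneg_right h3 h2.le

theorem stmt4' (μ σ : ℝ) (hμ : 0 < μ) (hσ : 0 < σ) (r : ℝ) (hr : r = σ / μ)
    (ρ : ℝ) (hρ1 : 1 ≤ ρ) (hρeq : (ρ - 1) ^ 3 / (2 * ρ - 1) ^ 2 = r ^ 2) :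
      (∃! p : ℝ, p ∈ Set.Ioo (μ / 2) μ ∧ (μ - p) ^ 3 / (2 * p - μ) = σ ^ 2) ∧
      (∀ p : ℝ, p ∈ Set.Ioo (μ / 2) μ → (μ - p) ^ 3 / (2 * p - μ) = σ ^ 2 →
        p = ρ * μ / (2 * ρ - 1)) ∧
      IsLeast
        ((fun p : ℝ => max (1 + σ ^ 2 / (μ - p) ^ 2) (μ / p + σ ^ 2 / (p * (μ - p)))) ''
          Set.Ioo 0 μ) ρ ∧
      max (1 + σ ^ 2 / (μ - ρ * μ / (2 * ρ - 1)) ^ 2)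
          (μ / (ρ * μ / (2 * ρ - 1)) +
            σ ^ 2 / (ρ * μ / (2 * ρ - 1) * (μ - ρ * μ / (2 * ρ - 1)))) = ρ := by
  have hr0 : 0 < r := by rw [hr]; positivity
  have hσμ : σ = r * μ := by rw [hr]; field_simp
  have h2ρ0 : (0:ℝ) < 2 * ρ - 1 := by linarith
  have h2ρne : ρ * 2 - 1 ≠ 0 := by linarith
  have heq' : (ρ - 1)^3 = r^2 * (2*ρ - 1)^2 := by
    field_simp at hρeq; linarith [hρeq]
  have hρgt : 1 < ρ := by
    rcases eq_or_lt_of_le hρ1 with h | h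
    · exfalso
      rw [← h] at heq'
      nlinarith [sq_nonneg (2*ρ-1)]
    · exact h
  set P : ℝ := ρ * μ / (2 * ρ - 1) with hP
  clear_value P
  have hPval : P * (2 * ρ - 1) = ρ * μ := by rw [hP]; field_simp
  have hPpos : 0 < P := by rw [hP]; positivity
  have hPμ2 : μ / 2 < P := by
    rw [hP, lt_div_iff₀ h2ρ0]; nlinarith
  have hPμ : P < μ := by
    rw [hP, div_lt_iff₀ h2ρ0]; nlinarith
  have hmP : 0 < μ - P := by linarith
  -- σ² / (μ - P)² = ρ - 1
  have hA : σ ^ 2 / (μ - P) ^ 2 = ρ - 1 := by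
    rw [hσμ, div_eq_iff (by positivity)]
    have : μ - P = μ * (ρ - 1) / (2 * ρ - 1) := by rw [hP]; field_simp; ring
    rw [this]
    rw [div_pow]
    field_simp
    nlinarith [heq', sq_nonneg μ]
  have hB : μ / P + σ ^ 2 / (P * (μ - P)) = ρ := by
    have hmPe : μ - P = μ * (ρ - 1) / (2 * ρ - 1) := by rw [hP]; field_simp; ring
    rw [hσμ, hmPe, hP]
    have h1 : ρ - 1 ≠ 0 := by linarith
    field_simp
    linear_combination (-1) * heq'
  have hg : (μ - P) ^ 3 / (2 * P - μ) = σ ^ 2 := by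
    have hmPe : μ - P = μ * (ρ - 1) / (2 * ρ - 1) := by rw [hP]; field_simp; ring
    have h2Pμ : 2 * P - μ = μ / (2 * ρ - 1) := by rw [hP]; field_simp; ring
    rw [div_eq_iff (by linarith : 2*P - μ ≠ 0), hσμ, hmPe, h2Pμ]
    field_simp
    linear_combination heq'
  have hq : ρ * P^2 - (ρ+1) * μ * P + μ^2 + σ^2 = 0 := by
    rw [hσμ, hP]
    field_simp
    linear_combination (-μ^2) * heq'
  have hvert : 2 * ρ * P ≤ (ρ+1) * μ := by
    rw [hP, ← mul_div_assoc, div_le_iff₀ h2ρ0]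
    nlinarith
  have hmax : max (1 + σ ^ 2 / (μ - P) ^ 2) (μ / P + σ ^ 2 / (P * (μ - P))) = ρ := by
    rw [hA, hB]
    norm_num
  have hlower : ∀ p ∈ Set.Ioo (0:ℝ) μ, ρ ≤
      max (1 + σ ^ 2 / (μ - p) ^ 2) (μ / p + σ ^ 2 / (p * (μ - p))) := by
    rintro p ⟨hp0, hpμ⟩
    rcases le_total p P with hle | hle
    · refine le_trans ?_ (le_max_right _ _)
      have hden : 0 < p * (μ - p) := mul_pos hp0 (by linarith)
      have h1 : 0 ≤ P - p := by linarith
      have h2' : ρ * p ≤ ρ * P := mul_le_mul_of_nonneg_left hle (by linarith)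
      have h2 : 0 ≤ (ρ+1) * μ - ρ * (p + P) := by nlinarith [hvert]
      have hqp : 0 ≤ ρ * p^2 - (ρ+1) * μ * p + μ^2 + σ^2 := by
        nlinarith [mul_nonneg h1 h2]
      have hrw : μ / p + σ ^ 2 / (p * (μ - p)) = (μ * (μ - p) + σ^2) / (p * (μ - p)) := by
        field_simp
      rw [hrw, le_div_iff₀ hden]
      nlinarith [hqp]
    · refine le_trans ?_ (le_max_left _ _)
      have hsq : (μ - p)^2 ≤ (μ - P)^2 :=
        pow_le_pow_left₀ (by linarith) (by linarith) 2
      have hdl : σ^2 / (μ - P)^2 ≤ σ^2 / (μ - p)^2 :=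
        div_le_div_of_nonneg_left (sq_nonneg σ) (pow_pos (by linarith) 2) hsq
      rw [hA] at hdl
      linarith
  have huniq : ∀ q : ℝ, q ∈ Set.Ioo (μ/2) μ → (μ - q)^3/(2*q - μ) = σ^2 → q = P := by
    rintro q ⟨hq1, hq2⟩ hqe
    by_contra hne
    rcases lt_or_gt_of_ne hne with h | h
    · have := p_anti hq1 h hPμ
      rw [hg, hqe] at this
      exact lt_irrefl _ this
    · have := p_anti hPμ2 h hq2
      rw [hg, hqe] at this
      exact lt_irrefl _ this
  refine ⟨⟨P, ⟨⟨hPμ2, hPμ⟩, hg⟩, fun q hq => huniq q hq.1 hq.2⟩,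
    fun p hp hpe => huniq p hp hpe, ⟨⟨P, ⟨hPpos, hPμ⟩, hmax⟩, ?_⟩, hmax⟩
  rintro x ⟨p, hp, rfl⟩
  exact hlower p hp


/-- For `μ, σ > 0` and `r = σ/μ`:
(i) `(ρ−1)³/(2ρ−1)² = r²` has a unique solution `ρ ∈ [1,∞)`;
(ii) `(μ−p)³/(2p−μ) = σ²` has a unique solution `p* ∈ (μ/2, μ)`, and `p* = ρμ/(2ρ−1)`;
(iii) `inf_{0<p<μ} max{1 + σ²/(μ−p)², μ/p + σ²/(p(μ−p))}` equals `ρ` and is attained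
at `p = p*`. -/
theorem stmt4 (μ σ : ℝ) (hμ : 0 < μ) (hσ : 0 < σ) (r : ℝ) (hr : r = σ / μ) :
    (∃! ρ : ℝ, 1 ≤ ρ ∧ (ρ - 1) ^ 3 / (2 * ρ - 1) ^ 2 = r ^ 2) ∧
    ∀ ρ : ℝ, 1 ≤ ρ → (ρ - 1) ^ 3 / (2 * ρ - 1) ^ 2 = r ^ 2 →
      (∃! p : ℝ, p ∈ Set.Ioo (μ / 2) μ ∧ (μ - p) ^ 3 / (2 * p - μ) = σ ^ 2) ∧
      (∀ p : ℝ, p ∈ Set.Ioo (μ / 2) μ → (μ - p) ^ 3 / (2 * p - μ) = σ ^ 2 →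
        p = ρ * μ / (2 * ρ - 1)) ∧
      IsLeast
        ((fun p : ℝ => max (1 + σ ^ 2 / (μ - p) ^ 2) (μ / p + σ ^ 2 / (p * (μ - p)))) ''
          Set.Ioo 0 μ) ρ ∧
      max (1 + σ ^ 2 / (μ - ρ * μ / (2 * ρ - 1)) ^ 2)
          (μ / (ρ * μ / (2 * ρ - 1)) +
            σ ^ 2 / (ρ * μ / (2 * ρ - 1) * (μ - ρ * μ / (2 * ρ - 1)))) = ρ := by
  constructor
  · obtain ⟨ρ, h1, h2⟩ := rho_exists (sq_nonneg r)
    refine ⟨ρ, ⟨h1, h2⟩, ?_⟩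
    rintro y ⟨hy1, hy2⟩
    by_contra hne
    rcases lt_or_gt_of_ne hne with h | h
    · have := rho_mono hy1 h
      rw [hy2, h2] at this
      exact lt_irrefl _ this
    · have := rho_mono h1 h
      rw [hy2, h2] at this
      exact lt_irrefl _ this
  · intro ρ hρ1 hρeq
    exact stmt4' μ σ hμ hσ r hr ρ hρ1 hρeq
end

section
/- For every r ≥ 0, the unique solution ρ_D(r) ∈ [1,∞) of the equation (ρ−1)³/(2ρ−1)² = r² satisfies the two-sided bound 1 + 4r² ≤ ρ_D(r) ≤ 2 + 4r². -/
private lemma stmt5_uniq (a b : ℝ) (ha : 1 ≤ a) (hb : 1 ≤ b)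
    (h : (b - 1) ^ 3 * (2 * a - 1) ^ 2 = (a - 1) ^ 3 * (2 * b - 1) ^ 2) : a = b := by
  set x := a - 1 with hx
  set y := b - 1 with hy
  have hx0 : 0 ≤ x := by simp [hx]; linarith
  have hy0 : 0 ≤ y := by simp [hy]; linarith
  have hid : y ^ 3 * (2 * a - 1) ^ 2 - x ^ 3 * (2 * b - 1) ^ 2
      = (y - x) * (4 * x ^ 2 * y ^ 2 + 4 * x * y * (x + y) + (x ^ 2 + x * y + y ^ 2)) := by
    simp only [hx, hy]; ring
  by_contra hne
  rcases lt_or_gt_of_ne hne with hlt | hlt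
  · have hxy : x < y := by simp [hx, hy]; linarith
    have hypos : 0 < y := lt_of_le_of_lt hx0 hxy
    have hB : 0 < 4 * x ^ 2 * y ^ 2 + 4 * x * y * (x + y) + (x ^ 2 + x * y + y ^ 2) := by
      have h1 : 0 ≤ 4 * x ^ 2 * y ^ 2 := by positivity
      have h2 : 0 ≤ 4 * x * y * (x + y) := by positivity
      nlinarith [sq_nonneg x, mul_nonneg hx0 hy0, sq_nonneg y]
    linarith [mul_pos (sub_pos.mpr hxy) hB, hid, h]
  · have hxy : y < x := by simp [hx, hy]; linarith
    have hxpos : 0 < x := lt_of_le_of_lt hy0 hxy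
    have hB : 0 < 4 * x ^ 2 * y ^ 2 + 4 * x * y * (x + y) + (x ^ 2 + x * y + y ^ 2) := by
      have h1 : 0 ≤ 4 * x ^ 2 * y ^ 2 := by positivity
      have h2 : 0 ≤ 4 * x * y * (x + y) := by positivity
      nlinarith [sq_nonneg y, mul_nonneg hx0 hy0, sq_nonneg x]
    linarith [mul_pos (sub_pos.mpr hxy) hB, hid, h]

/-- For every `r ≥ 0` the equation `(ρ−1)³/(2ρ−1)² = r²` has a unique
solution `ρ_D(r) ∈ [1,∞)`, and it satisfies `1 + 4r² ≤ ρ_D(r) ≤ 2 + 4r²`. -/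
theorem stmt5 (r : ℝ) (hr : 0 ≤ r) :
    (∃! ρ : ℝ, 1 ≤ ρ ∧ (ρ - 1) ^ 3 / (2 * ρ - 1) ^ 2 = r ^ 2) ∧
    ∀ ρ : ℝ, 1 ≤ ρ → (ρ - 1) ^ 3 / (2 * ρ - 1) ^ 2 = r ^ 2 →
      1 + 4 * r ^ 2 ≤ ρ ∧ ρ ≤ 2 + 4 * r ^ 2 := by
  have hden : ∀ ρ : ℝ, 1 ≤ ρ → (0:ℝ) < (2 * ρ - 1) ^ 2 := by
    intro ρ hρ; nlinarith
  have hpoly : ∀ ρ : ℝ, 1 ≤ ρ → (ρ - 1) ^ 3 / (2 * ρ - 1) ^ 2 = r ^ 2 →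
      (ρ - 1) ^ 3 = r ^ 2 * (2 * ρ - 1) ^ 2 := by
    intro ρ hρ heq
    exact (div_eq_iff (ne_of_gt (hden ρ hρ))).mp heq
  have key : ∀ ρ : ℝ, 1 ≤ ρ → (ρ - 1) ^ 3 / (2 * ρ - 1) ^ 2 = r ^ 2 →
      1 + 4 * r ^ 2 ≤ ρ ∧ ρ ≤ 2 + 4 * r ^ 2 := by
    intro ρ hρ heq
    have heq' := hpoly ρ hρ heq
    have hd := hden ρ hρ
    constructor
    · nlinarith [mul_nonneg (sub_nonneg.mpr hρ) (sub_nonneg.mpr hρ), sq_nonneg r,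
        mul_nonneg (mul_nonneg (sub_nonneg.mpr hρ) (sub_nonneg.mpr hρ)) (sub_nonneg.mpr hρ)]
    · nlinarith [sq_nonneg r, mul_nonneg (sub_nonneg.mpr hρ) (sq_nonneg r)]
  refine ⟨?_, key⟩
  -- existence via IVT on [1, 2 + 4 r^2]
  set M : ℝ := 2 + 4 * r ^ 2 with hM
  have h1M : (1:ℝ) ≤ M := by nlinarith [sq_nonneg r]
  have hcont : ContinuousOn (fun ρ : ℝ => (ρ - 1) ^ 3 / (2 * ρ - 1) ^ 2) (Set.Icc 1 M) := by
    apply ContinuousOn.div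
    · fun_prop
    · fun_prop
    · intro x hx
      have : (1:ℝ) ≤ x := hx.1
      exact ne_of_gt (hden x this)
  have hf1 : ((1:ℝ) - 1) ^ 3 / (2 * (1:ℝ) - 1) ^ 2 = 0 := by norm_num
  have hfM : r ^ 2 ≤ (M - 1) ^ 3 / (2 * M - 1) ^ 2 := by
    rw [le_div_iff₀ (hden M h1M)]
    nlinarith [sq_nonneg r, sq_nonneg (r^2)]
  have hmem : r ^ 2 ∈ Set.Icc (((1:ℝ) - 1) ^ 3 / (2 * (1:ℝ) - 1) ^ 2)
      ((M - 1) ^ 3 / (2 * M - 1) ^ 2) := by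
    constructor
    · rw [hf1]; positivity
    · exact hfM
  obtain ⟨ρ, hρmem, hρeq⟩ := intermediate_value_Icc h1M hcont hmem
  refine ⟨ρ, ⟨hρmem.1, hρeq⟩, ?_⟩
  rintro b ⟨hb1, hbeq⟩
  have hb' := hpoly b hb1 hbeq
  have hρ' := hpoly ρ hρmem.1 hρeq
  apply stmt5_uniq b ρ hb1 hρmem.1
  nlinarith [hb', hρ', sq_nonneg ((2*b-1)*(2*ρ-1))]
end

section
/- Let μ > 0 and σ ≥ 0, and let (π₁,π₂) with 0 < π₁ ≤ π₂ be the unique solution of the system π₁(1 + ln(π₂/π₁)) = μ and π₁(2π₂ − π₁) = μ² + σ². Then the maximin robust revenue over randomized price mechanisms equals π₁: sup over probability measures A on [0,∞) of inf_{F ∈ 𝔽_{μ,σ}} REV(A;F) equals π₁, and the supremum is attained by the log-lottery P^log_{μ,σ}, i.e., REV(P^log_{μ,σ};F) ≥ π₁ for every F ∈ 𝔽_{μ,σ}. -/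
open MeasureTheory

/-- The log-lottery `P^log` with parameters `p1 ≤ p2`: the probability measure supported on
`[p1,p2]` whose cdf on `[p1,p2)` is
`x ↦ (p2·ln(x/p1) − (x−p1)) / (p2·ln(p2/p1) − (p2−p1))`
(for `p1 = p2` this is the point mass at `p1`). -/
structure IsLogLottery (A : Measure ℝ) (p1 p2 : ℝ) : Prop where
  prob : IsProbabilityMeasure A
  supp : A (Set.Icc p1 p2) = 1
  cdf : ∀ x ∈ Set.Ico p1 p2,
    A (Set.Iic x) = ENNReal.ofReal
      ((p2 * Real.log (x / p1) - (x - p1)) / (p2 * Real.log (p2 / p1) - (p2 - p1)))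

namespace Stmt6Aux
open Set
open scoped NNReal ENNReal

noncomputable def nuD (p1 p2 : ℝ) : ℝ → ℝ :=
  fun p => (p2 / p - 1) / (p2 * Real.log (p2 / p1) - (p2 - p1))

noncomputable def nu (p1 p2 : ℝ) : Measure ℝ :=
  (volume.restrict (Set.Ioc p1 p2)).withDensity (fun p => ENNReal.ofReal (nuD p1 p2 p))

lemma intI1 (p2 : ℝ) {a b : ℝ} (ha : 0 < a) (hab : a ≤ b) :
    ∫ t in a..b, (p2 / t - 1) = p2 * Real.log (b / a) - (b - a) := by
  have hb : 0 < b := lt_of_lt_of_le ha hab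
  have hne : ∀ x : ℝ, x ∈ Set.uIcc a b → x ≠ 0 := by
    intro x hx
    rcases hx with ⟨h1', h2'⟩
    have : a ≤ x := by simpa [min_eq_left hab] using h1'
    exact ne_of_gt (lt_of_lt_of_le ha this)
  have hint : IntervalIntegrable (fun t : ℝ => t⁻¹) volume a b :=
    intervalIntegral.intervalIntegrable_inv hne (by fun_prop)
  simp only [div_eq_mul_inv]
  rw [intervalIntegral.integral_sub (hint.const_mul p2) intervalIntegrable_const,
    intervalIntegral.integral_const_mul, integral_inv_of_pos ha hb]
  simp [div_eq_mul_inv]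

lemma intI1' (p1 p2 : ℝ) {c : ℝ} (hp1 : 0 < p1) (hc : p1 ≤ c) :
    ∫ t in p1..c, nuD p1 p2 t
      = (p2 * Real.log (c / p1) - (c - p1)) / (p2 * Real.log (p2 / p1) - (p2 - p1)) := by
  unfold nuD
  rw [intervalIntegral.integral_div, intI1 p2 hp1 hc]

lemma Zpos (p1 p2 : ℝ) (hp1 : 0 < p1) (h12 : p1 < p2) :
    0 < p2 * Real.log (p2 / p1) - (p2 - p1) := by
  have h2' : 0 < p2 := lt_trans hp1 h12
  have key : Real.log (p1 / p2) < p1 / p2 - 1 :=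
    Real.log_lt_sub_one_of_pos (by positivity) (ne_of_lt ((div_lt_one h2').2 h12))
  have hlog : Real.log (p1 / p2) = - Real.log (p2 / p1) := by
    rw [← Real.log_inv]; congr 1; field_simp
  rw [hlog] at key
  have h3 : 1 - p1/p2 < Real.log (p2/p1) := by linarith
  have := (mul_lt_mul_iff_right₀ h2').2 h3
  calc (0:ℝ) < p2 * Real.log (p2/p1) - p2 * (1 - p1/p2) := by linarith
  _ = p2 * Real.log (p2/p1) - (p2 - p1) := by field_simp

lemma nuD_contOn (p1 p2 : ℝ) (hp1 : 0 < p1) {a b : ℝ} (ha : p1 ≤ a) :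
    ContinuousOn (nuD p1 p2) (Set.Icc a b) := by
  unfold nuD
  apply ContinuousOn.div_const
  apply ContinuousOn.sub _ continuousOn_const
  apply ContinuousOn.div continuousOn_const continuousOn_id
  intro x hx
  exact ne_of_gt (lt_of_lt_of_le hp1 (le_trans ha hx.1))

lemma nuD_intOn (p1 p2 : ℝ) (hp1 : 0 < p1) {a b : ℝ} (ha : p1 ≤ a) :
    IntegrableOn (nuD p1 p2) (Set.Ioc a b) volume :=
  ((nuD_contOn p1 p2 hp1 ha).integrableOn_Icc).mono_set Set.Ioc_subset_Icc_self

lemma nuD_nonneg (p1 p2 : ℝ) (hp1 : 0 < p1) (h12 : p1 < p2) {p : ℝ}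
    (h1 : p1 < p) (h2 : p ≤ p2) : 0 ≤ nuD p1 p2 p := by
  have hZ := Zpos p1 p2 hp1 h12
  have hp : 0 < p := lt_trans hp1 h1
  apply div_nonneg _ (le_of_lt hZ)
  rw [sub_nonneg, le_div_iff₀ hp]
  linarith

lemma inter_Iic_Ioc (p1 p2 x : ℝ) :
    Set.Iic x ∩ Set.Ioc p1 p2 = Set.Ioc p1 (min x p2) := by
  ext t
  simp only [Set.mem_inter_iff, Set.mem_Iic, Set.mem_Ioc, le_min_iff]
  tauto

lemma nu_Iic (p1 p2 : ℝ) (hp1 : 0 < p1) (h12 : p1 < p2) (x : ℝ) :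
    nu p1 p2 (Set.Iic x)
      = ENNReal.ofReal ((p2 * Real.log (max p1 (min x p2) / p1) - (max p1 (min x p2) - p1))
          / (p2 * Real.log (p2 / p1) - (p2 - p1))) := by
  rw [nu, withDensity_apply _ measurableSet_Iic, Measure.restrict_restrict measurableSet_Iic,
    inter_Iic_Ioc]
  rcases lt_or_ge x p1 with hx | hx
  · have h1 : min x p2 < p1 := lt_of_le_of_lt (min_le_left _ _) hx
    rw [Set.Ioc_eq_empty (by intro h; exact absurd (lt_trans h h1) (lt_irrefl _)),
      Measure.restrict_empty, lintegral_zero_measure]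
    rw [max_eq_left (le_of_lt h1)]
    simp [div_self (ne_of_gt hp1)]
  · have hc : p1 ≤ min x p2 := le_min hx (le_of_lt h12)
    rw [max_eq_right hc]
    rw [← ofReal_integral_eq_lintegral_ofReal
        ((nuD_intOn p1 p2 hp1 (le_refl p1)).mono_set (by
          apply Set.Ioc_subset_Ioc_right (min_le_right x p2)))
        ((ae_restrict_iff' measurableSet_Ioc).2 (Filter.Eventually.of_forall (fun p hp =>
          nuD_nonneg p1 p2 hp1 h12 hp.1 (le_trans hp.2 (min_le_right x p2)))))]
    rw [← intervalIntegral.integral_of_le hc, intI1' p1 p2 hp1 hc]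

lemma nu_empty_inter (p1 p2 : ℝ) {s : Set ℝ} (hs : MeasurableSet s)
    (h : s ∩ Set.Ioc p1 p2 = ∅) : nu p1 p2 s = 0 := by
  rw [nu, withDensity_apply _ hs, Measure.restrict_restrict hs, h,
    Measure.restrict_empty, lintegral_zero_measure]

lemma nu_Iic_p1 (p1 p2 : ℝ) (hp1 : 0 < p1) (h12 : p1 < p2) : nu p1 p2 (Set.Iic p1) = 0 := by
  rw [nu_Iic p1 p2 hp1 h12]
  rw [min_eq_left (le_of_lt h12), max_self]
  simp [div_self (ne_of_gt hp1)]

lemma nu_Iic_p2 (p1 p2 : ℝ) (hp1 : 0 < p1) (h12 : p1 < p2) : nu p1 p2 (Set.Iic p2) = 1 := by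
  rw [nu_Iic p1 p2 hp1 h12, min_self, max_eq_right (le_of_lt h12),
    div_self (ne_of_gt (Zpos p1 p2 hp1 h12))]
  simp

lemma nu_univ (p1 p2 : ℝ) (hp1 : 0 < p1) (h12 : p1 < p2) : nu p1 p2 Set.univ = 1 := by
  apply le_antisymm
  · rw [← Set.Iic_union_Ioi (a := p2)]
    refine le_trans (measure_union_le _ _) ?_
    rw [nu_Iic_p2 p1 p2 hp1 h12, nu_empty_inter p1 p2 measurableSet_Ioi (by
      ext t; simp only [Set.mem_inter_iff, Set.mem_Ioi, Set.mem_Ioc, Set.mem_empty_iff_false,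
        iff_false, not_and]; intro h1 h2 h3; linarith)]
    simp
  · rw [← nu_Iic_p2 p1 p2 hp1 h12]
    exact measure_mono (Set.subset_univ _)

lemma nu_prob (p1 p2 : ℝ) (hp1 : 0 < p1) (h12 : p1 < p2) : IsProbabilityMeasure (nu p1 p2) :=
  ⟨nu_univ p1 p2 hp1 h12⟩

lemma nu_Icc (p1 p2 : ℝ) (hp1 : 0 < p1) (h12 : p1 < p2) : nu p1 p2 (Set.Icc p1 p2) = 1 := by
  apply le_antisymm
  · rw [← nu_univ p1 p2 hp1 h12]; exact measure_mono (Set.subset_univ _)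
  · rw [← nu_Iic_p2 p1 p2 hp1 h12]
    refine le_trans (measure_mono (show Set.Iic p2 ⊆ Set.Iic p1 ∪ Set.Icc p1 p2 by
      intro t ht
      rcases le_or_gt t p1 with h | h
      · exact Or.inl h
      · exact Or.inr ⟨le_of_lt h, ht⟩)) ?_
    refine le_trans (measure_union_le _ _) ?_
    rw [nu_Iic_p1 p1 p2 hp1 h12, zero_add]

lemma nu_Iio_zero (p1 p2 : ℝ) (hp1 : 0 < p1) : nu p1 p2 (Set.Iio 0) = 0 := by
  apply nu_empty_inter p1 p2 measurableSet_Iio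
  ext t
  simp only [Set.mem_inter_iff, Set.mem_Iio, Set.mem_Ioc, Set.mem_empty_iff_false, iff_false,
    not_and]
  intro h1 h2 h3; linarith

lemma nu_isLogLottery (p1 p2 : ℝ) (hp1 : 0 < p1) (h12 : p1 < p2) :
    IsLogLottery (nu p1 p2) p1 p2 := by
  refine ⟨nu_prob p1 p2 hp1 h12, nu_Icc p1 p2 hp1 h12, ?_⟩
  intro x hx
  rw [nu_Iic p1 p2 hp1 h12, min_eq_left (le_of_lt hx.2), max_eq_right hx.1]

/-- Any log-lottery equals `nu`. -/
lemma logLottery_eq_nu (p1 p2 : ℝ) (hp1 : 0 < p1) (h12 : p1 < p2)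
    {A : Measure ℝ} (hA : IsLogLottery A p1 p2) : A = nu p1 p2 := by
  have hprob := hA.prob
  refine Measure.ext_of_Iic A (nu p1 p2) (fun x => ?_)
  rcases lt_or_ge x p1 with hx | hx
  · have h1 : A (Set.Iic x) = 0 := by
      have hcompl : A (Set.Icc p1 p2)ᶜ = 0 := by
        have := measure_compl (μ := A) (s := Set.Icc p1 p2) measurableSet_Icc (measure_ne_top A _)
        rw [hA.supp] at this
        simpa using this
      refine measure_mono_null (fun t ht => ?_) hcompl
      simp only [Set.mem_compl_iff, Set.mem_Icc, not_and, not_le]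
      intro h1'; exact absurd (le_trans h1' (Set.mem_Iic.1 ht)) (not_le.2 hx)
    rw [h1, nu_Iic p1 p2 hp1 h12]
    have hm : min x p2 < p1 := lt_of_le_of_lt (min_le_left _ _) hx
    rw [max_eq_left (le_of_lt hm)]
    simp [div_self (ne_of_gt hp1)]
  · rcases lt_or_ge x p2 with hx2 | hx2
    · rw [hA.cdf x ⟨hx, hx2⟩, nu_Iic p1 p2 hp1 h12, min_eq_left (le_of_lt hx2),
        max_eq_right hx]
    · have h1 : A (Set.Iic x) = 1 := by
        apply le_antisymm (prob_le_one)
        rw [← hA.supp]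
        exact measure_mono (fun t ht => le_trans ht.2 hx2)
      have h2 : nu p1 p2 (Set.Iic x) = 1 := by
        apply le_antisymm
        · rw [← nu_univ p1 p2 hp1 h12]; exact measure_mono (Set.subset_univ _)
        · rw [← nu_Iic_p2 p1 p2 hp1 h12]
          exact measure_mono (Set.Iic_subset_Iic.2 hx2)
      rw [h1, h2]

/-- The nonnegative "expected payment below x" function. -/
noncomputable def G (p1 p2 : ℝ) (x : ℝ) : ℝ :=
  (p2 * (max p1 (min x p2) - p1) - ((max p1 (min x p2))^2 - p1^2)/2)
    / (p2 * Real.log (p2 / p1) - (p2 - p1))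

lemma nuD_measurable (p1 p2 : ℝ) : Measurable (nuD p1 p2) := by
  unfold nuD
  exact ((measurable_const.div measurable_id).sub measurable_const).div_const _

lemma intI2 (p2 : ℝ) (a b : ℝ) :
    ∫ t in a..b, (p2 - t) = p2 * (b - a) - (b^2 - a^2)/2 := by
  rw [intervalIntegral.integral_sub intervalIntegrable_const
    intervalIntegral.intervalIntegrable_id, intervalIntegral.integral_const, integral_id]
  simp [smul_eq_mul]; ring

lemma nu_H (p1 p2 : ℝ) (hp1 : 0 < p1) (h12 : p1 < p2) (x : ℝ) :
    ∫⁻ p in Set.Iic x, ENNReal.ofReal p ∂(nu p1 p2) = ENNReal.ofReal (G p1 p2 x) := by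
  have hZ := Zpos p1 p2 hp1 h12
  rw [nu, restrict_withDensity measurableSet_Iic,
    lintegral_withDensity_eq_lintegral_mul _ ((nuD_measurable p1 p2).ennreal_ofReal)
      ENNReal.measurable_ofReal,
    Measure.restrict_restrict measurableSet_Iic, inter_Iic_Ioc]
  rcases lt_or_ge x p1 with hx | hx
  · have h1 : min x p2 < p1 := lt_of_le_of_lt (min_le_left _ _) hx
    rw [Set.Ioc_eq_empty (by intro h; exact absurd (lt_trans h h1) (lt_irrefl _)),
      Measure.restrict_empty, lintegral_zero_measure]
    rw [G, max_eq_left (le_of_lt h1)]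
    simp
  · have hc : p1 ≤ min x p2 := le_min hx (le_of_lt h12)
    set c := min x p2 with hcdef
    have hcle : c ≤ p2 := min_le_right x p2
    have hstep : ∀ p ∈ Set.Ioc p1 c,
        (ENNReal.ofReal (nuD p1 p2 p) * ENNReal.ofReal p) = ENNReal.ofReal (nuD p1 p2 p * p) := by
      intro p hp
      exact (ENNReal.ofReal_mul (nuD_nonneg p1 p2 hp1 h12 hp.1 (le_trans hp.2 hcle))).symm
    simp only [Pi.mul_apply]
    rw [setLIntegral_congr_fun measurableSet_Ioc hstep]
    have hInt : IntegrableOn (fun p => nuD p1 p2 p * p) (Set.Ioc p1 c) volume := by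
      exact (((nuD_contOn p1 p2 hp1 (le_refl p1)).mul
        continuousOn_id).integrableOn_Icc).mono_set Set.Ioc_subset_Icc_self
    rw [← ofReal_integral_eq_lintegral_ofReal hInt
        ((ae_restrict_iff' measurableSet_Ioc).2 (Filter.Eventually.of_forall (fun p hp =>
          mul_nonneg (nuD_nonneg p1 p2 hp1 h12 hp.1 (le_trans hp.2 hcle))
            (le_of_lt (lt_trans hp1 hp.1)))))]
    rw [← intervalIntegral.integral_of_le hc]
    have heqon : Set.EqOn (fun p => nuD p1 p2 p * p)
        (fun p => (p2 - p) / (p2 * Real.log (p2 / p1) - (p2 - p1))) (Set.uIcc p1 c) := by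
      intro p hp
      have hp1' : p1 ≤ p := by
        rcases hp with ⟨h1', h2'⟩
        simpa [min_eq_left hc] using h1'
      have hpne : p ≠ 0 := ne_of_gt (lt_of_lt_of_le hp1 hp1')
      show nuD p1 p2 p * p = _
      rw [nuD, div_mul_eq_mul_div, sub_mul, div_mul_cancel₀ _ hpne, one_mul]
    rw [intervalIntegral.integral_congr heqon, intervalIntegral.integral_div, intI2]
    rw [G, max_eq_right hc]

/-- Main identity: revenue of `nu` against `F` is `∫ G dF`, for any finite `F`. -/
lemma G_cont (p1 p2 : ℝ) : Continuous (G p1 p2) := by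
  have hc : Continuous fun x : ℝ => max p1 (min x p2) :=
    continuous_const.max (continuous_id.min continuous_const)
  exact ((continuous_const.mul (hc.sub continuous_const)).sub
    (((hc.pow 2).sub continuous_const).div_const 2)).div_const _

lemma G_nonneg (p1 p2 : ℝ) (hp1 : 0 < p1) (h12 : p1 < p2) (x : ℝ) : 0 ≤ G p1 p2 x := by
  have hZ := Zpos p1 p2 hp1 h12
  set c := max p1 (min x p2) with hcdef
  have hc1 : p1 ≤ c := le_max_left _ _
  have hc2 : c ≤ p2 := max_le (le_of_lt h12) (min_le_right _ _)
  apply div_nonneg _ (le_of_lt hZ)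
  nlinarith

lemma rev_measurable (F : Measure ℝ) : Measurable (rev F) := by
  have h1 : Antitone (fun p : ℝ => F (Set.Ici p)) :=
    fun a b hab => measure_mono (Set.Ici_subset_Ici.2 hab)
  exact measurable_id.mul (ENNReal.measurable_toReal.comp h1.measurable)

lemma ae_nonneg_of_Iio_zero (A : Measure ℝ) (h : A (Set.Iio 0) = 0) :
    ∀ᵐ p ∂A, 0 ≤ p := by
  rw [Filter.eventually_iff, mem_ae_iff]
  have : {p : ℝ | 0 ≤ p}ᶜ = Set.Iio 0 := by
    ext t; simp [not_le]
  rw [this]; exact h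

lemma mrev_nu (p1 p2 : ℝ) (hp1 : 0 < p1) (h12 : p1 < p2)
    (F : Measure ℝ) (hF : IsProbabilityMeasure F) (hFsupp : F (Set.Iio 0) = 0) :
    mrev (nu p1 p2) F = ∫ x, G p1 p2 x ∂F := by
  haveI := hF
  haveI := nu_prob p1 p2 hp1 h12
  have hae : ∀ᵐ p ∂(nu p1 p2), 0 ≤ p :=
    ae_nonneg_of_Iio_zero _ (nu_Iio_zero p1 p2 hp1)
  have step1 : mrev (nu p1 p2) F
      = (∫⁻ p, ENNReal.ofReal (rev F p) ∂(nu p1 p2)).toReal := by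
    apply integral_eq_lintegral_of_nonneg_ae
    · filter_upwards [hae] with p hp
      exact mul_nonneg hp ENNReal.toReal_nonneg
    · exact (rev_measurable F).aestronglyMeasurable
  have step2 : ∫⁻ p, ENNReal.ofReal (rev F p) ∂(nu p1 p2)
      = ∫⁻ p, ENNReal.ofReal p * F (Set.Ici p) ∂(nu p1 p2) := by
    apply lintegral_congr_ae
    filter_upwards [hae] with p hp
    rw [rev, ENNReal.ofReal_mul hp, ENNReal.ofReal_toReal (measure_ne_top F _)]
  have step3 : ∀ p : ℝ, ENNReal.ofReal p * F (Set.Ici p)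
      = ∫⁻ x, (Set.Ici p).indicator (fun _ => ENNReal.ofReal p) x ∂F := by
    intro p
    rw [lintegral_indicator measurableSet_Ici, setLIntegral_const]
  have hKmeas : Measurable (Function.uncurry fun p x : ℝ =>
      (Set.Ici p).indicator (fun _ => ENNReal.ofReal p) x) := by
    have : (Function.uncurry fun p x : ℝ =>
        (Set.Ici p).indicator (fun _ => ENNReal.ofReal p) x)
        = fun z : ℝ × ℝ => if z.1 ≤ z.2 then ENNReal.ofReal z.1 else 0 := by
      ext z
      simp [Function.uncurry, Set.indicator_apply, Set.mem_Ici]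
    rw [this]
    exact Measurable.ite (measurableSet_le measurable_fst measurable_snd)
      (measurable_fst.ennreal_ofReal) measurable_const
  have step4 : ∫⁻ p, ENNReal.ofReal p * F (Set.Ici p) ∂(nu p1 p2)
      = ∫⁻ x, ∫⁻ p, (Set.Ici p).indicator (fun _ => ENNReal.ofReal p) x ∂(nu p1 p2) ∂F := by
    rw [← lintegral_lintegral_swap hKmeas.aemeasurable]
    exact lintegral_congr fun p => step3 p
  have step5 : ∀ x : ℝ, ∫⁻ p, (Set.Ici p).indicator (fun _ => ENNReal.ofReal p) x ∂(nu p1 p2)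
      = ENNReal.ofReal (G p1 p2 x) := by
    intro x
    have : (fun p : ℝ => (Set.Ici p).indicator (fun _ => ENNReal.ofReal p) x)
        = (Set.Iic x).indicator (fun p => ENNReal.ofReal p) := by
      ext p
      simp [Set.indicator_apply, Set.mem_Ici, Set.mem_Iic]
    rw [this, lintegral_indicator measurableSet_Iic, nu_H p1 p2 hp1 h12 x]
  have step6 : ∫ x, G p1 p2 x ∂F = (∫⁻ x, ENNReal.ofReal (G p1 p2 x) ∂F).toReal := by
    apply integral_eq_lintegral_of_nonneg_ae
    · exact Filter.Eventually.of_forall (G_nonneg p1 p2 hp1 h12)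
    · exact (G_cont p1 p2).measurable.aestronglyMeasurable
  rw [step1, step2, step4, step6]
  congr 1
  exact lintegral_congr step5

lemma sq_int (F : Measure ℝ) [IsProbabilityMeasure F] (m : ℝ)
    (h1 : Integrable (fun x => x) F) (h2 : Integrable (fun x => x ^ 2) F) :
    Integrable (fun x => (x - m) ^ 2) F ∧
    ∫ x, (x - m) ^ 2 ∂F = (∫ x, x ^ 2 ∂F) - 2 * m * (∫ x, x ∂F) + m ^ 2 := by
  have hrw : (fun x : ℝ => (x - m) ^ 2)
      = fun x => x ^ 2 + (-(2 * m)) * x + m ^ 2 := by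
    funext x; ring
  have hint : Integrable (fun x : ℝ => x ^ 2 + (-(2 * m)) * x + m ^ 2) F :=
    (h2.add (h1.const_mul _)).add (integrable_const _)
  have I1 : Integrable (fun x : ℝ => x ^ 2 + (-(2 * m)) * x) F := h2.add (h1.const_mul _)
  constructor
  · rw [hrw]; exact hint
  · rw [hrw, integral_add I1 (integrable_const _),
      integral_add h2 (h1.const_mul _), integral_const_mul, integral_const]
    simp [measure_univ]
    ring

/-- Part 2 of the statement. -/
lemma part2 (μ σ : ℝ) (hμ : 0 < μ) (hσ : 0 ≤ σ)
    (p1 p2 : ℝ) (hp1 : 0 < p1) (hp12 : p1 ≤ p2)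
    (heq1 : p1 * (1 + Real.log (p2 / p1)) = μ)
    (heq2 : p1 * (2 * p2 - p1) = μ ^ 2 + σ ^ 2) :
    ∀ A : Measure ℝ, IsLogLottery A p1 p2 →
      ∀ F : Measure ℝ, MeanVarLe F μ σ → p1 ≤ mrev A F := by
  intro A hA F hF
  haveI := hF.prob
  haveI := hA.prob
  rcases eq_or_lt_of_le hp12 with heqp | h12
  · -- degenerate case p1 = p2 : point mass
    subst heqp
    have hμp : μ = p1 := by
      rw [← heq1, div_self (ne_of_gt hp1), Real.log_one]; ring
    have hσ0 : σ ^ 2 = 0 := by nlinarith [heq2, hμp]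
    -- F is a point mass at μ
    have hvarint := sq_int F μ hF.int_mean hF.int_sq
    have hvar0 : ∫ x, (x - μ) ^ 2 ∂F = 0 := by
      refine le_antisymm ?_ (integral_nonneg (fun x => sq_nonneg _))
      have hv := hF.var_le
      rw [hσ0] at hv
      exact hv
    have hae : (fun x => (x - μ) ^ 2) =ᵐ[F] 0 :=
      (integral_eq_zero_iff_of_nonneg (fun x => sq_nonneg _) hvarint.1).1 hvar0
    have haex : ∀ᵐ x ∂F, x = μ := by
      filter_upwards [hae] with x hx
      have hx' : (x - μ) ^ 2 = 0 := hx
      have := pow_eq_zero_iff (n := 2) (by norm_num) |>.1 hx'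
      linarith [sub_eq_zero.1 this]
    have hIci : F (Set.Ici μ) = 1 := by
      have h0 : F (Set.Iio μ) = 0 := by
        refine measure_mono_null (fun t ht => ?_) haex
        · simp only [Set.mem_Iio] at ht
          simp only [Set.mem_compl_iff, Set.mem_setOf_eq]
          exact ne_of_lt ht
      have := measure_add_measure_compl (μ := F) (measurableSet_Ici (a := μ))
      rw [Set.compl_Ici, h0, add_zero, measure_univ] at this
      exact this
    -- A is a point mass at p1
    have hAcompl : A ({p1}ᶜ) = 0 := by
      have hsupp := hA.supp
      rw [Set.Icc_self] at hsupp
      have := measure_compl (μ := A) (s := {p1}) (measurableSet_singleton p1)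
        (measure_ne_top A _)
      rw [hsupp] at this
      simpa using this
    have haeA : ∀ᵐ p ∂A, rev F p = rev F p1 := by
      refine measure_mono_null (fun t ht => ?_) hAcompl
      simp only [Set.mem_compl_iff, Set.mem_singleton_iff]
      intro h; subst h; exact ht rfl
    have : mrev A F = rev F p1 := by
      rw [mrev, integral_congr_ae haeA, integral_const]
      simp [measure_univ]
    rw [this, rev, ← hμp, hIci]
    simp [hμp]
  · -- main case p1 < p2
    have hZ := Zpos p1 p2 hp1 h12
    set L := Real.log (p2 / p1) with hL
    set Z := p2 * L - (p2 - p1) with hZdef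
    rw [logLottery_eq_nu p1 p2 hp1 h12 hA,
      mrev_nu p1 p2 hp1 h12 F hF.prob hF.supp]
    -- second moment bound
    set M2 := ∫ x, x ^ 2 ∂F with hM2def
    have hvarint := sq_int F μ hF.int_mean hF.int_sq
    have hM2 : M2 ≤ μ ^ 2 + σ ^ 2 := by
      have := hF.var_le
      rw [hvarint.2, hF.mean] at this
      nlinarith
    -- the quadratic lower bound
    set Q : ℝ → ℝ := fun x => (p2 * (x - p1) - (x ^ 2 - p1 ^ 2) / 2) / Z with hQdef
    have hQrw : ∀ x, Q x = (p2 / Z) * x + (-(1 / (2 * Z))) * x ^ 2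
        + (p1 ^ 2 / 2 - p2 * p1) / Z := by
      intro x
      rw [hQdef]
      field_simp
      ring
    have hQint : Integrable Q F := by
      have : Integrable (fun x : ℝ => (p2 / Z) * x + (-(1 / (2 * Z))) * x ^ 2
          + (p1 ^ 2 / 2 - p2 * p1) / Z) F :=
        ((hF.int_mean.const_mul _).add (hF.int_sq.const_mul _)).add (integrable_const _)
      exact this.congr (Filter.Eventually.of_forall (fun x => (hQrw x).symm))
    have I2 : Integrable (fun x : ℝ => (p2 / Z) * x + (-(1 / (2 * Z))) * x ^ 2) F :=
      (hF.int_mean.const_mul _).add (hF.int_sq.const_mul _)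
    have hQval : ∫ x, Q x ∂F = (p2 / Z) * μ + (-(1 / (2 * Z))) * M2
        + (p1 ^ 2 / 2 - p2 * p1) / Z := by
      rw [integral_congr_ae (Filter.Eventually.of_forall hQrw),
        integral_add I2 (integrable_const _),
        integral_add (hF.int_mean.const_mul _) (hF.int_sq.const_mul _),
        integral_const_mul, integral_const_mul, integral_const, hF.mean]
      simp [measure_univ]
      exact Or.inl rfl
    have hGint : Integrable (G p1 p2) F := by
      refine Integrable.mono' (integrable_const (p2 * (p2 - p1) / Z))
        (G_cont p1 p2).measurable.aestronglyMeasurable ?_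
      refine Filter.Eventually.of_forall (fun x => ?_)
      rw [Real.norm_eq_abs, abs_of_nonneg (G_nonneg p1 p2 hp1 h12 x)]
      rw [G]
      rw [div_le_div_iff_of_pos_right hZ]
      set c := max p1 (min x p2) with hcdef
      have hc1 : p1 ≤ c := le_max_left _ _
      have hc2 : c ≤ p2 := max_le (le_of_lt h12) (min_le_right _ _)
      nlinarith
    have hGQ : ∀ x : ℝ, 0 ≤ x → Q x ≤ G p1 p2 x := by
      intro x hx
      rw [hQdef, G]
      rw [div_le_div_iff_of_pos_right hZ]
      set c := max p1 (min x p2) with hcdef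
      rcases le_total x p1 with hle | hge
      · have hcx : c = p1 := by
          rw [hcdef, min_eq_left (le_trans hle (le_of_lt h12)), max_eq_left hle]
        rw [hcx]
        nlinarith
      · rcases le_total x p2 with hle2 | hge2
        · have hcx : c = x := by rw [hcdef, min_eq_left hle2, max_eq_right hge]
          rw [hcx]
        · have hcx : c = p2 := by
            rw [hcdef, min_eq_right hge2, max_eq_right (le_of_lt h12)]
          rw [hcx]
          nlinarith [sq_nonneg (x - p2)]
    have hcomp : ∫ x, Q x ∂F ≤ ∫ x, G p1 p2 x ∂F := by
      apply integral_mono_ae hQint hGint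
      filter_upwards [ae_nonneg_of_Iio_zero F hF.supp] with x hx
      exact hGQ x hx
    refine le_trans ?_ hcomp
    rw [hQval]
    have hform : (p2 / Z) * μ + (-(1 / (2 * Z))) * M2 + (p1 ^ 2 / 2 - p2 * p1) / Z
        = (p2 * μ - M2 / 2 + (p1 ^ 2 / 2 - p2 * p1)) / Z := by
      field_simp
      ring
    rw [hform, le_div_iff₀ hZ]
    have h4 : p2 * μ = p2 * p1 + p2 * (p1 * L) := by rw [← heq1]; ring
    have h5 : M2 ≤ p1 * (2 * p2 - p1) := by rw [heq2]; exact hM2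
    rw [hZdef]
    linarith [h4, h5]

/-! ### The worst-case distribution -/

noncomputable def Fd (p1 p2 : ℝ) : Measure ℝ :=
  (volume.restrict (Set.Ioo p1 p2)).withDensity (fun x => ENNReal.ofReal (p1 / x ^ 2))

noncomputable def Fstar (p1 p2 : ℝ) : Measure ℝ :=
  Fd p1 p2 + (ENNReal.ofReal (p1 / p2)) • Measure.dirac p2

lemma intI3 (p1 : ℝ) {a b : ℝ} (ha : 0 < a) (hab : a ≤ b) :
    ∫ x in a..b, p1 / x ^ 2 = p1 / a - p1 / b := by
  have hb : 0 < b := lt_of_lt_of_le ha hab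
  have h0 : (0:ℝ) ∉ Set.uIcc a b := by
    rw [Set.uIcc_of_le hab]
    intro h; exact absurd h.1 (not_le.2 ha)
  have hrw : Set.EqOn (fun x : ℝ => p1 / x ^ 2) (fun x : ℝ => p1 * x ^ (-2 : ℤ))
      (Set.uIcc a b) := by
    intro x hx
    have hxne : x ≠ 0 := fun h => h0 (h ▸ hx)
    show p1 / x ^ 2 = p1 * x ^ (-2 : ℤ)
    rw [zpow_neg, div_eq_mul_inv]
    norm_num
  rw [intervalIntegral.integral_congr hrw, intervalIntegral.integral_const_mul,
    integral_zpow (Or.inr ⟨by norm_num, h0⟩)]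
  have hane : a ≠ 0 := ne_of_gt ha
  have hbne : b ≠ 0 := ne_of_gt hb
  norm_num
  field_simp
  ring

lemma Fd_density_eq (p1 p2 : ℝ) (hp1 : 0 < p1) :
    (fun x : ℝ => ENNReal.ofReal (p1 / x ^ 2))
      = (fun x : ℝ => ((Real.toNNReal (p1 / x ^ 2) : ℝ≥0) : ℝ≥0∞)) := by
  funext x
  rfl

lemma Fd_nnmeas (p1 : ℝ) : Measurable (fun x : ℝ => Real.toNNReal (p1 / x ^ 2)) :=
  (measurable_const.div (measurable_id.pow_const 2)).real_toNNReal

lemma Fd_contOn (p1 : ℝ) {a b : ℝ} (ha : 0 < a) :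
    ContinuousOn (fun x : ℝ => p1 / x ^ 2) (Set.Icc a b) := by
  apply ContinuousOn.div continuousOn_const (continuousOn_pow 2)
  intro x hx
  exact pow_ne_zero 2 (ne_of_gt (lt_of_lt_of_le ha hx.1))

lemma Fd_int (p1 p2 : ℝ) (hp1 : 0 < p1) (hp12 : p1 ≤ p2) (g : ℝ → ℝ) (hg : Continuous g) :
    Integrable g (Fd p1 p2) ∧ ∫ x, g x ∂(Fd p1 p2) = ∫ x in p1..p2, (p1 / x ^ 2) * g x := by
  have hsmul : (fun x : ℝ => Real.toNNReal (p1 / x ^ 2) • g x)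
      = fun x : ℝ => (p1 / x ^ 2) * g x := by
    funext x
    rw [NNReal.smul_def, Real.coe_toNNReal _ (div_nonneg (le_of_lt hp1) (sq_nonneg x)),
      smul_eq_mul]
  have hint : IntegrableOn (fun x : ℝ => (p1 / x ^ 2) * g x) (Set.Ioo p1 p2) volume :=
    (((Fd_contOn p1 hp1).mul hg.continuousOn).integrableOn_Icc).mono_set
      Set.Ioo_subset_Icc_self
  constructor
  · rw [Fd, Fd_density_eq p1 p2 hp1,
      integrable_withDensity_iff_integrable_smul (Fd_nnmeas p1), hsmul]
    exact hint
  · rw [Fd, Fd_density_eq p1 p2 hp1, integral_withDensity_eq_integral_smul (Fd_nnmeas p1)]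
    have : ∫ x in Set.Ioo p1 p2, Real.toNNReal (p1 / x ^ 2) • g x ∂volume
        = ∫ x in Set.Ioo p1 p2, (p1 / x ^ 2) * g x ∂volume := by rw [hsmul]
    rw [this, restrict_Ioo_eq_restrict_Ioc, ← intervalIntegral.integral_of_le hp12]

lemma integrable_dirac_meas {g : ℝ → ℝ} (hg : Measurable g) (a : ℝ) :
    Integrable g (Measure.dirac a) := by
  constructor
  · exact hg.aestronglyMeasurable
  · simp [HasFiniteIntegral, lintegral_dirac]

lemma Fstar_int (p1 p2 : ℝ) (hp1 : 0 < p1) (hp12 : p1 ≤ p2) (g : ℝ → ℝ) (hg : Continuous g) :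
    Integrable g (Fstar p1 p2) ∧
    ∫ x, g x ∂(Fstar p1 p2) = (∫ x in p1..p2, (p1 / x ^ 2) * g x) + (p1 / p2) * g p2 := by
  have h1 := Fd_int p1 p2 hp1 hp12 g hg
  have h2 : Integrable g ((ENNReal.ofReal (p1 / p2)) • Measure.dirac p2) :=
    (integrable_dirac_meas hg.measurable p2).smul_measure ENNReal.ofReal_ne_top
  have hp2 : 0 < p2 := lt_of_lt_of_le hp1 hp12
  constructor
  · exact h1.1.add_measure h2
  · rw [Fstar, integral_add_measure h1.1 h2, h1.2, integral_smul_measure, integral_dirac,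
      ENNReal.toReal_ofReal (div_nonneg (le_of_lt hp1) (le_of_lt hp2)), smul_eq_mul]

lemma Fd_apply (p1 p2 : ℝ) {s : Set ℝ} (hs : MeasurableSet s) :
    Fd p1 p2 s = ∫⁻ x in s ∩ Set.Ioo p1 p2, ENNReal.ofReal (p1 / x ^ 2) ∂volume := by
  rw [Fd, withDensity_apply _ hs, Measure.restrict_restrict hs]

lemma Fd_apply_empty (p1 p2 : ℝ) {s : Set ℝ} (hs : MeasurableSet s)
    (h : s ∩ Set.Ioo p1 p2 = ∅) : Fd p1 p2 s = 0 := by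
  rw [Fd_apply p1 p2 hs, h, Measure.restrict_empty, lintegral_zero_measure]

lemma Fd_lint (p1 p2 : ℝ) (hp1 : 0 < p1) {a : ℝ} (ha1 : p1 ≤ a) (ha2 : a ≤ p2) :
    ∫⁻ x in Set.Ioc a p2, ENNReal.ofReal (p1 / x ^ 2) ∂volume
      = ENNReal.ofReal (p1 / a - p1 / p2) := by
  have ha : 0 < a := lt_of_lt_of_le hp1 ha1
  have hint : IntegrableOn (fun x : ℝ => p1 / x ^ 2) (Set.Ioc a p2) volume :=
    ((Fd_contOn p1 ha).integrableOn_Icc).mono_set Set.Ioc_subset_Icc_self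
  rw [← ofReal_integral_eq_lintegral_ofReal hint
    ((ae_restrict_iff' measurableSet_Ioc).2 (Filter.Eventually.of_forall (fun x _ =>
      div_nonneg (le_of_lt hp1) (sq_nonneg x)))),
    ← intervalIntegral.integral_of_le ha2, intI3 p1 ha ha2]

lemma Fstar_univ (p1 p2 : ℝ) (hp1 : 0 < p1) (hp12 : p1 ≤ p2) :
    Fstar p1 p2 Set.univ = 1 := by
  have hp2 : 0 < p2 := lt_of_lt_of_le hp1 hp12
  rw [Fstar, Measure.add_apply, Measure.smul_apply,
    Fd_apply p1 p2 MeasurableSet.univ, Set.univ_inter, restrict_Ioo_eq_restrict_Ioc,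
    Fd_lint p1 p2 hp1 (le_refl p1) hp12]
  have hdir : (Measure.dirac p2) (Set.univ : Set ℝ) = 1 := measure_univ
  rw [hdir, smul_eq_mul, mul_one]
  rw [← ENNReal.ofReal_add (by
      rw [div_self (ne_of_gt hp1), sub_nonneg]
      exact div_le_one_of_le₀ hp12 (le_of_lt hp2)
      ) (div_nonneg (le_of_lt hp1) (le_of_lt hp2))]
  rw [div_self (ne_of_gt hp1)]
  norm_num

lemma Fstar_prob (p1 p2 : ℝ) (hp1 : 0 < p1) (hp12 : p1 ≤ p2) :
    IsProbabilityMeasure (Fstar p1 p2) := ⟨Fstar_univ p1 p2 hp1 hp12⟩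

lemma Fstar_Iio (p1 p2 : ℝ) (hp1 : 0 < p1) (hp12 : p1 ≤ p2) :
    Fstar p1 p2 (Set.Iio 0) = 0 := by
  have hp2 : 0 < p2 := lt_of_lt_of_le hp1 hp12
  rw [Fstar, Measure.add_apply, Measure.smul_apply,
    Fd_apply_empty p1 p2 measurableSet_Iio (by
      ext t
      simp only [Set.mem_inter_iff, Set.mem_Iio, Set.mem_Ioo, Set.mem_empty_iff_false,
        iff_false, not_and]
      intro h1 h2 h3; linarith),
    Measure.dirac_apply' _ measurableSet_Iio]
  simp [Set.indicator_apply, not_lt.2 (le_of_lt hp2)]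

lemma Fstar_Ici_mid (p1 p2 : ℝ) (hp1 : 0 < p1) (hp12 : p1 ≤ p2) {p : ℝ}
    (h1 : p1 < p) (h2 : p ≤ p2) : Fstar p1 p2 (Set.Ici p) = ENNReal.ofReal (p1 / p) := by
  have hp : 0 < p := lt_of_lt_of_le hp1 (le_of_lt h1)
  have hp2 : 0 < p2 := lt_of_lt_of_le hp1 hp12
  have hinter : Set.Ici p ∩ Set.Ioo p1 p2 = Set.Ico p p2 := by
    ext t
    simp only [Set.mem_inter_iff, Set.mem_Ici, Set.mem_Ioo, Set.mem_Ico]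
    constructor
    · rintro ⟨ha, _, hc⟩; exact ⟨ha, hc⟩
    · rintro ⟨ha, hb⟩; exact ⟨ha, lt_of_lt_of_le h1 ha, hb⟩
  rw [Fstar, Measure.add_apply, Measure.smul_apply, Fd_apply p1 p2 measurableSet_Ici, hinter,
    restrict_Ico_eq_restrict_Ioc, Fd_lint p1 p2 hp1 (le_of_lt h1) h2,
    Measure.dirac_apply' _ measurableSet_Ici]
  have : p2 ∈ Set.Ici p := h2
  rw [Set.indicator_of_mem this]
  simp only [Pi.one_apply, smul_eq_mul, mul_one]
  rw [← ENNReal.ofReal_add (by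
      rw [sub_nonneg]
      apply div_le_div_of_nonneg_left (le_of_lt hp1) hp h2
    ) (div_nonneg (le_of_lt hp1) (le_of_lt hp2))]
  ring_nf

lemma Fstar_Ici_top (p1 p2 : ℝ) (hp1 : 0 < p1) (hp12 : p1 ≤ p2) {p : ℝ}
    (h2 : p2 < p) : Fstar p1 p2 (Set.Ici p) = 0 := by
  rw [Fstar, Measure.add_apply, Measure.smul_apply,
    Fd_apply_empty p1 p2 measurableSet_Ici (by
      ext t
      simp only [Set.mem_inter_iff, Set.mem_Ici, Set.mem_Ioo, Set.mem_empty_iff_false,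
        iff_false, not_and]
      intro h1' h2' h3'; linarith),
    Measure.dirac_apply' _ measurableSet_Ici]
  rw [Set.indicator_of_notMem (by simp [Set.mem_Ici, not_le.2 h2])]
  simp

lemma rev_Fstar_le (p1 p2 : ℝ) (hp1 : 0 < p1) (hp12 : p1 ≤ p2) (p : ℝ) :
    rev (Fstar p1 p2) p ≤ p1 := by
  haveI := Fstar_prob p1 p2 hp1 hp12
  rcases le_or_gt p 0 with hp | hp
  · exact le_trans (mul_nonpos_of_nonpos_of_nonneg hp ENNReal.toReal_nonneg) (le_of_lt hp1)
  · rcases le_or_gt p p1 with hple | hpgt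
    · have hle1 : (Fstar p1 p2 (Set.Ici p)).toReal ≤ 1 := by
        have h := prob_le_one (μ := Fstar p1 p2) (s := Set.Ici p)
        have := ENNReal.toReal_mono (by simp) h
        simpa using this
      calc rev (Fstar p1 p2) p ≤ p * 1 := by
            rw [rev]
            exact mul_le_mul_of_nonneg_left hle1 (le_of_lt hp)
      _ ≤ p1 := by rw [mul_one]; exact hple
    · rcases le_or_gt p p2 with hple2 | hpgt2
      · rw [rev, Fstar_Ici_mid p1 p2 hp1 hp12 hpgt hple2,
          ENNReal.toReal_ofReal (div_nonneg (le_of_lt hp1) (le_of_lt hp))]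
        rw [mul_div_cancel₀ _ (ne_of_gt hp)]
      · rw [rev, Fstar_Ici_top p1 p2 hp1 hp12 hpgt2]
        simp [le_of_lt hp1]

lemma Fstar_meanVarLe (μ σ p1 p2 : ℝ) (hμ : 0 < μ) (hσ : 0 ≤ σ)
    (hp1 : 0 < p1) (hp12 : p1 ≤ p2)
    (heq1 : p1 * (1 + Real.log (p2 / p1)) = μ)
    (heq2 : p1 * (2 * p2 - p1) = μ ^ 2 + σ ^ 2) :
    MeanVarLe (Fstar p1 p2) μ σ := by
  have hp2 : 0 < p2 := lt_of_lt_of_le hp1 hp12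
  haveI := Fstar_prob p1 p2 hp1 hp12
  have hid := Fstar_int p1 p2 hp1 hp12 (fun x => x) continuous_id
  have hsq := Fstar_int p1 p2 hp1 hp12 (fun x => x ^ 2) (continuous_pow 2)
  have hid2 := hid.2
  have hsq2 := hsq.2
  have hmean : ∫ x, x ∂(Fstar p1 p2) = μ := by
    rw [hid2]
    have hcongr : Set.EqOn (fun x : ℝ => (p1 / x ^ 2) * x) (fun x : ℝ => p1 * x⁻¹)
        (Set.uIcc p1 p2) := by
      intro x hx
      rw [Set.uIcc_of_le hp12] at hx
      have hxne : x ≠ 0 := ne_of_gt (lt_of_lt_of_le hp1 hx.1)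
      show (p1 / x ^ 2) * x = p1 * x⁻¹
      field_simp
    rw [intervalIntegral.integral_congr hcongr, intervalIntegral.integral_const_mul,
      integral_inv_of_pos hp1 hp2, div_mul_cancel₀ _ (ne_of_gt hp2), ← heq1]
    ring
  have hsqval : ∫ x, x ^ 2 ∂(Fstar p1 p2) = p1 * (p2 - p1) + p1 * p2 := by
    rw [hsq2]
    have hcongr : Set.EqOn (fun x : ℝ => (p1 / x ^ 2) * x ^ 2) (fun _ : ℝ => p1)
        (Set.uIcc p1 p2) := by
      intro x hx
      rw [Set.uIcc_of_le hp12] at hx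
      have hxne : x ^ 2 ≠ 0 := pow_ne_zero 2 (ne_of_gt (lt_of_lt_of_le hp1 hx.1))
      show (p1 / x ^ 2) * x ^ 2 = p1
      field_simp
      exact div_self (ne_of_gt (lt_of_lt_of_le hp1 hx.1))
    rw [intervalIntegral.integral_congr hcongr, intervalIntegral.integral_const, smul_eq_mul]
    have : p1 / p2 * p2 ^ 2 = p1 * p2 := by field_simp
    rw [this]
    ring
  refine ⟨inferInstance, Fstar_Iio p1 p2 hp1 hp12, hid.1, hsq.1, hmean, ?_⟩
  have hvar := sq_int (Fstar p1 p2) μ hid.1 hsq.1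
  rw [hvar.2, hsqval, hmean]
  nlinarith [heq2]

end Stmt6Aux

/-- For `μ > 0`, `σ ≥ 0`, and `(π₁,π₂)` with `0 < π₁ ≤ π₂` the (unique)
solution of `π₁(1 + ln(π₂/π₁)) = μ`, `π₁(2π₂ − π₁) = μ² + σ²`, the maximin robust revenue
over randomized price mechanisms equals `π₁`:
`sup_A inf_{F ∈ 𝔽_{μ,σ}} REV(A;F) = π₁`, attained by the log-lottery, i.e.
`REV(P^log_{μ,σ};F) ≥ π₁` for every `F ∈ 𝔽_{μ,σ}`. -/


theorem stmt6 (μ σ : ℝ) (hμ : 0 < μ) (hσ : 0 ≤ σ)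
    (p1 p2 : ℝ) (hp1 : 0 < p1) (hp12 : p1 ≤ p2)
    (heq1 : p1 * (1 + Real.log (p2 / p1)) = μ)
    (heq2 : p1 * (2 * p2 - p1) = μ ^ 2 + σ ^ 2) :
    (⨆ A : {A : Measure ℝ // IsPriceMech A},
        ⨅ F : {F : Measure ℝ // MeanVarLe F μ σ}, mrev A.1 F.1) = p1 ∧
    ∀ A : Measure ℝ, IsLogLottery A p1 p2 →
      ∀ F : Measure ℝ, MeanVarLe F μ σ → p1 ≤ mrev A F := by
  classical
  have hp2 : 0 < p2 := lt_of_lt_of_le hp1 hp12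
  have hFstar := Stmt6Aux.Fstar_meanVarLe μ σ p1 p2 hμ hσ hp1 hp12 heq1 heq2
  haveI instF : Nonempty {F : Measure ℝ // MeanVarLe F μ σ} := ⟨⟨_, hFstar⟩⟩
  obtain ⟨A₀, hA₀mech, hA₀log⟩ :
      ∃ A₀ : Measure ℝ, IsPriceMech A₀ ∧ IsLogLottery A₀ p1 p2 := by
    rcases eq_or_lt_of_le hp12 with heqp | h12
    · subst heqp
      refine ⟨Measure.dirac p1, ⟨inferInstance, ?_⟩, inferInstance, ?_, ?_⟩
      · rw [Measure.dirac_apply' _ measurableSet_Iio]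
        simp [Set.indicator_apply, Set.mem_Iio, lt_asymm hp1]
      · rw [Set.Icc_self, Measure.dirac_apply' _ (measurableSet_singleton p1)]
        simp
      · intro x hx
        rw [Set.Ico_self] at hx
        exact absurd hx (Set.notMem_empty x)
    · exact ⟨Stmt6Aux.nu p1 p2,
        ⟨Stmt6Aux.nu_prob p1 p2 hp1 h12, Stmt6Aux.nu_Iio_zero p1 p2 hp1⟩,
        Stmt6Aux.nu_isLogLottery p1 p2 hp1 h12⟩
  haveI instA : Nonempty {A : Measure ℝ // IsPriceMech A} := ⟨⟨A₀, hA₀mech⟩⟩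
  have hpart2 := Stmt6Aux.part2 μ σ hμ hσ p1 p2 hp1 hp12 heq1 heq2
  have hBddBelow : ∀ A : {A : Measure ℝ // IsPriceMech A},
      BddBelow (Set.range (fun F : {F : Measure ℝ // MeanVarLe F μ σ} => mrev A.1 F.1)) := by
    intro A
    refine ⟨0, ?_⟩
    rintro y ⟨F, rfl⟩
    apply integral_nonneg_of_ae
    filter_upwards [Stmt6Aux.ae_nonneg_of_Iio_zero A.1 A.2.2] with p hp
    exact mul_nonneg hp ENNReal.toReal_nonneg
  have hub : ∀ A : {A : Measure ℝ // IsPriceMech A},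
      (⨅ F : {F : Measure ℝ // MeanVarLe F μ σ}, mrev A.1 F.1) ≤ p1 := by
    intro A
    haveI := A.2.1
    refine ciInf_le_of_le (hBddBelow A) ⟨_, hFstar⟩ ?_
    by_cases hi : Integrable (rev (Stmt6Aux.Fstar p1 p2)) A.1
    · calc mrev A.1 (Stmt6Aux.Fstar p1 p2) ≤ ∫ _, p1 ∂A.1 :=
          integral_mono hi (integrable_const _)
            (fun p => Stmt6Aux.rev_Fstar_le p1 p2 hp1 hp12 p)
      _ = p1 := by simp [measure_univ]
    · unfold mrev
      rw [integral_undef hi]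
      exact le_of_lt hp1
  constructor
  · apply le_antisymm
    · exact ciSup_le hub
    · apply le_ciSup_of_le ⟨p1, by rintro y ⟨A, rfl⟩; exact hub A⟩ ⟨A₀, hA₀mech⟩
      exact le_ciInf (fun F => hpart2 A₀ hA₀log F.1 F.2)
  · exact fun A hA F hF => hpart2 A hA F hF
end

section
/- Let μ > 0, σ ≥ 0, r = σ/μ, and let ρ(r) be the unique solution ρ ∈ [1,∞) of (2e^{ρ−1}−1)/ρ² = r² + 1. Let (π₁,π₂) be the unique solution with 0 < π₁ ≤ π₂ of π₁(1 + ln(π₂/π₁)) = μ and π₁(2π₂ − π₁) = μ² + σ². Then π₁ = μ/ρ(r), and consequently the log-lottery P^log_{μ,σ} guarantees: for every F ∈ 𝔽_{μ,σ}, REV(P^log_{μ,σ};F) ≥ μ/ρ(r) and hence OPT(F) ≤ ρ(r)·REV(P^log_{μ,σ};F). -/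
open MeasureTheory

open intervalIntegral
open scoped ENNReal NNReal


lemma aux_v_pos {x : ℝ} (hx : 1 < x) : 0 < Real.exp (x-1) * (x-2) + 1 := by
  have h : StrictMonoOn (fun y : ℝ => Real.exp (y-1) * (y-2) + 1) (Set.Ici 1) := by
    apply strictMonoOn_of_deriv_pos (convex_Ici 1)
    · fun_prop
    · intro y hy
      rw [interior_Ici] at hy
      have hd : HasDerivAt (fun y : ℝ => Real.exp (y-1) * (y-2) + 1)
          (Real.exp (y-1) * (y-1)) y := by
        have h1 : HasDerivAt (fun y : ℝ => Real.exp (y-1)) (Real.exp (y-1)) y := by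
          simpa [Function.comp_def] using ((Real.hasDerivAt_exp (y-1)).comp y ((hasDerivAt_id y).sub_const 1))
        have := (h1.mul ((hasDerivAt_id y).sub_const 2)).add_const 1
        exact this.congr_deriv (by simp only [id_eq]; ring)
      rw [hd.deriv]
      exact mul_pos (Real.exp_pos _) (by linarith [Set.mem_Ioi.1 hy])
  have := h (Set.self_mem_Ici) (Set.mem_Ici.2 hx.le) hx
  norm_num at this
  linarith

lemma aux_g_inj {a b : ℝ} (ha : 1 ≤ a) (hb : 1 ≤ b)
    (h : (2 * Real.exp (a-1) - 1) / a ^ 2 = (2 * Real.exp (b-1) - 1) / b ^ 2) : a = b := by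
  have hmono : StrictMonoOn (fun x : ℝ => (2 * Real.exp (x-1) - 1) / x ^ 2) (Set.Ici 1) := by
    apply strictMonoOn_of_deriv_pos (convex_Ici 1)
    · apply ContinuousOn.div
      · fun_prop
      · fun_prop
      · intro x hx
        have : (0:ℝ) < x := lt_of_lt_of_le one_pos hx
        positivity
    · intro x hx
      rw [interior_Ici] at hx
      rw [Set.mem_Ioi] at hx
      have hx0 : (0:ℝ) < x := lt_trans one_pos hx
      have h1 : HasDerivAt (fun x : ℝ => 2 * Real.exp (x-1) - 1) (2 * Real.exp (x-1)) x := by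
        have h0 : HasDerivAt (fun x : ℝ => Real.exp (x-1)) (Real.exp (x-1)) x := by
          simpa [Function.comp_def] using ((Real.hasDerivAt_exp (x-1)).comp x ((hasDerivAt_id x).sub_const 1))
        exact (h0.const_mul 2).sub_const 1
      have h2 : HasDerivAt (fun x : ℝ => x ^ 2) (2*x) x := by
        simpa using hasDerivAt_pow 2 x
      have hd := h1.div h2 (by positivity)
      rw [show deriv (fun x : ℝ => (2 * Real.exp (x-1) - 1) / x ^ 2) x = _ from hd.deriv]
      have hv := aux_v_pos hx
      have hnum : 0 < 2 * Real.exp (x-1) * x ^ 2 - (2 * Real.exp (x-1) - 1) * (2*x) := by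
        nlinarith [Real.exp_pos (x-1)]
      positivity
  exact hmono.injOn (Set.mem_Ici.2 ha) (Set.mem_Ici.2 hb) h


-- FTC 1: integral of p2/p - 1
lemma aux_ftc1 {p1 x : ℝ} (h0 : 0 < p1) (h : p1 ≤ x) (p2 C : ℝ) :
    ∫ p in p1..x, (p2/p - 1)/C = (p2 * Real.log (x/p1) - (x - p1))/C := by
  have hne : (0:ℝ) ∉ Set.uIcc p1 x := by
    rw [Set.uIcc_of_le h]
    intro h'
    exact absurd h'.1 (by linarith)
  have hi1 : IntervalIntegrable (fun p : ℝ => p2 * (1/p)) volume p1 x :=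
    (intervalIntegrable_one_div (fun p hp h' => hne (h' ▸ hp))
      (by fun_prop)).const_mul p2
  have hi2 : IntervalIntegrable (fun _ : ℝ => (1:ℝ)) volume p1 x :=
    intervalIntegrable_const
  have key : ∫ p in p1..x, (p2 * (1/p) - 1) = p2 * Real.log (x/p1) - (x - p1) := by
    rw [intervalIntegral.integral_sub hi1 hi2, intervalIntegral.integral_const_mul,
      integral_one_div hne]
    simp
  calc ∫ p in p1..x, (p2/p - 1)/C = ∫ p in p1..x, (p2 * (1/p) - 1) * C⁻¹ := by
        congr 1; ext p; rw [div_eq_mul_inv]; ring_nf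
    _ = (p2 * Real.log (x/p1) - (x - p1))/C := by
        rw [intervalIntegral.integral_mul_const, key, ← div_eq_mul_inv]

-- FTC 2: integral of (p2 - p)/C
lemma aux_ftc2 (p1 y p2 C : ℝ) :
    ∫ p in p1..y, (p2 - p)/C = (p2*(y-p1) - (y^2-p1^2)/2)/C := by
  have h : ∫ p in p1..y, (p2 - p) = p2*(y-p1) - (y^2-p1^2)/2 := by
    rw [intervalIntegral.integral_sub intervalIntegrable_const intervalIntegrable_id]
    rw [integral_id, intervalIntegral.integral_const]
    rw [smul_eq_mul]; ring
  calc ∫ p in p1..y, (p2 - p)/C = ∫ p in p1..y, (p2 - p) * C⁻¹ := by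
        simp only [div_eq_mul_inv]
    _ = _ := by rw [intervalIntegral.integral_mul_const, h, ← div_eq_mul_inv]


lemma aux_C_pos {p1 p2 : ℝ} (h0 : 0 < p1) (h12 : p1 < p2) :
    0 < p2 * Real.log (p2/p1) - (p2 - p1) := by
  have h2 : 0 < p2 := lt_trans h0 h12
  have hlt : Real.log (p1/p2) < p1/p2 - 1 :=
    Real.log_lt_sub_one_of_pos (by positivity) (by
      intro h; rw [div_eq_one_iff_eq (ne_of_gt h2)] at h; linarith)
  rw [Real.log_div (ne_of_gt h0) (ne_of_gt h2)] at hlt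
  rw [Real.log_div (ne_of_gt h2) (ne_of_gt h0)]
  have : 1 - p1/p2 < Real.log p2 - Real.log p1 := by linarith
  have h3 : p2 * (1 - p1/p2) = p2 - p1 := by field_simp
  nlinarith

noncomputable def nu (p1 p2 : ℝ) : Measure ℝ :=
  (volume.restrict (Set.Ioc p1 p2)).withDensity
    (fun p => ENNReal.ofReal ((p2/p - 1)/(p2 * Real.log (p2/p1) - (p2 - p1))))

lemma aux_nu_Iic {p1 p2 : ℝ} (h0 : 0 < p1) (h12 : p1 < p2) (x : ℝ) :
    nu p1 p2 (Set.Iic x) = ENNReal.ofReal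
      ((p2 * Real.log ((max p1 (min x p2)) / p1) - (max p1 (min x p2) - p1)) /
        (p2 * Real.log (p2/p1) - (p2 - p1))) := by
  set C := p2 * Real.log (p2/p1) - (p2 - p1) with hC
  set y := max p1 (min x p2) with hy
  have hy1 : p1 ≤ y := le_max_left _ _
  have hy2 : y ≤ p2 := max_le h12.le (min_le_right _ _)
  have hset : Set.Iic x ∩ Set.Ioc p1 p2 = Set.Ioc p1 y := by
    ext p
    simp only [Set.mem_inter_iff, Set.mem_Iic, Set.mem_Ioc, hy, le_max_iff, le_min_iff]
    constructor
    · rintro ⟨hpx, hp1, hp2⟩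
      exact ⟨hp1, Or.inr ⟨hpx, hp2⟩⟩
    · rintro ⟨hp1, hp⟩
      rcases hp with hp | ⟨hpx, hp2⟩
      · exact absurd (lt_of_lt_of_le hp1 hp) (lt_irrefl p1)
      · exact ⟨hpx, hp1, hp2⟩
  have hg : ∀ p ∈ Set.Ioc p1 y, 0 ≤ (p2/p - 1)/C := by
    intro p hp
    have hp0 : 0 < p := lt_trans h0 hp.1
    have : 1 ≤ p2/p := (one_le_div hp0).2 (le_trans hp.2 hy2)
    have hCp := aux_C_pos h0 h12
    exact div_nonneg (by linarith) hCp.le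
  have hint : IntegrableOn (fun p => (p2/p - 1)/C) (Set.Ioc p1 y) volume := by
    apply (ContinuousOn.integrableOn_Icc _).mono_set Set.Ioc_subset_Icc_self
    apply ContinuousOn.div_const
    apply ContinuousOn.sub (ContinuousOn.div continuousOn_const continuousOn_id _)
      continuousOn_const
    intro p hp
    have : 0 < p := lt_of_lt_of_le h0 hp.1
    exact ne_of_gt this
  rw [nu, withDensity_apply _ measurableSet_Iic,
    Measure.restrict_restrict measurableSet_Iic, hset,
    ← ofReal_integral_eq_lintegral_ofReal hint
      (ae_restrict_of_forall_mem measurableSet_Ioc hg),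
    ← intervalIntegral.integral_of_le hy1, aux_ftc1 h0 hy1]
section
variable {p1 p2 : ℝ} {A : MeasureTheory.Measure ℝ}

lemma aux_A_eq_nu (h0 : 0 < p1) (h12 : p1 < p2)
    (hprob : IsProbabilityMeasure A)
    (hsupp : A (Set.Icc p1 p2) = 1)
    (hcdf : ∀ x ∈ Set.Ico p1 p2,
      A (Set.Iic x) = ENNReal.ofReal
        ((p2 * Real.log (x / p1) - (x - p1)) / (p2 * Real.log (p2 / p1) - (p2 - p1)))) :
    A = nu p1 p2 := by
  haveI := hprob
  have hC := aux_C_pos h0 h12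
  apply Measure.ext_of_Iic
  intro x
  rw [aux_nu_Iic h0 h12]
  rcases lt_or_ge x p1 with hx | hx
  · have h1 : A (Set.Iic x) = 0 := by
      apply measure_mono_null (t := (Set.Icc p1 p2)ᶜ)
      · intro p hp
        simp only [Set.mem_compl_iff, Set.mem_Icc, not_and_or, not_le]
        exact Or.inl (lt_of_le_of_lt hp hx)
      · rw [measure_compl measurableSet_Icc (measure_ne_top A _), hsupp, measure_univ]
        simp
    have h2 : max p1 (min x p2) = p1 := max_eq_left (le_trans (min_le_left _ _) hx.le)
    rw [h1, h2, div_self (ne_of_gt h0), Real.log_one]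
    simp
  · rcases lt_or_ge x p2 with hx2 | hx2
    · have h2 : max p1 (min x p2) = x := by
        rw [min_eq_left hx2.le, max_eq_right hx]
      rw [h2, hcdf x ⟨hx, hx2⟩]
    · have h1 : A (Set.Iic x) = 1 := by
        refine le_antisymm prob_le_one ?_
        calc (1:ENNReal) = A (Set.Icc p1 p2) := hsupp.symm
          _ ≤ A (Set.Iic x) := measure_mono (fun p hp => le_trans hp.2 hx2)
      have h2 : max p1 (min x p2) = p2 := by
        rw [min_eq_right hx2, max_eq_right h12.le]
      rw [h1, h2, div_self (ne_of_gt hC)]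
      simp
end

lemma aux_mrev_ge {p1 p2 : ℝ} (h0 : 0 < p1) (h12 : p1 < p2) {m s : ℝ}
    (heq1 : p1 * (1 + Real.log (p2/p1)) = m) (heq2 : p1 * (2 * p2 - p1) = m^2 + s^2)
    (F : Measure ℝ) (hF : MeanVarLe F m s) :
    p1 ≤ ∫ p, rev F p ∂(nu p1 p2) := by
  haveI := hF.prob
  have hC := aux_C_pos h0 h12
  set C := p2 * Real.log (p2/p1) - (p2 - p1) with hCdef
  set g : ℝ → ℝ := fun p => (p2/p - 1)/C with hgdef
  set μ0 : Measure ℝ := volume.restrict (Set.Ioc p1 p2) with hμ0def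
  haveI : IsFiniteMeasure μ0 := ⟨by
    rw [hμ0def, Measure.restrict_apply_univ]; exact measure_Ioc_lt_top⟩
  have hgmeas : Measurable g := by
    apply Measurable.div_const
    exact (measurable_const.div measurable_id).sub measurable_const
  have hg0 : ∀ p ∈ Set.Ioc p1 p2, 0 ≤ g p := by
    intro p hp
    have hp0 : 0 < p := lt_trans h0 hp.1
    have h1 : 1 ≤ p2/p := (one_le_div hp0).2 hp.2
    exact div_nonneg (by linarith) hC.le
  set M : ℝ := (p2/p1 - 1)/C * p2 with hMdef
  have hM0 : 0 ≤ M := by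
    have : 1 ≤ p2/p1 := (one_le_div h0).2 h12.le
    have h2 : (0:ℝ) < p2 := lt_trans h0 h12
    apply mul_nonneg (div_nonneg (by linarith) hC.le) h2.le
  have hgpM : ∀ p ∈ Set.Ioc p1 p2, g p * p ≤ M := by
    intro p hp
    have hp0 : 0 < p := lt_trans h0 hp.1
    have h1 : p2/p ≤ p2/p1 := by
      apply div_le_div_of_nonneg_left (le_of_lt (lt_trans h0 h12)) h0 hp.1.le
    have h2 : g p ≤ (p2/p1 - 1)/C := by
      exact (div_le_div_iff_of_pos_right hC).2 (by linarith)
    calc g p * p ≤ ((p2/p1 - 1)/C) * p2 :=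
          mul_le_mul h2 hp.2 hp0.le (div_nonneg (by
            have : 1 ≤ p2/p1 := (one_le_div h0).2 h12.le
            linarith) hC.le)
      _ = M := rfl
  -- Step A
  have stepA : ∫ p, rev F p ∂(nu p1 p2) = ∫ p, ((g p).toNNReal : ℝ) * rev F p ∂μ0 := by
    have hnu : nu p1 p2 = μ0.withDensity (fun p => ((g p).toNNReal : ℝ≥0∞)) := rfl
    rw [hnu, integral_withDensity_eq_integral_smul hgmeas.real_toNNReal]
    simp [NNReal.smul_def]
  -- Step B
  set Kf : ℝ → ℝ → ℝ := fun p x => if p ≤ x then g p * p else 0 with hKfdef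
  have hrev : ∀ p ∈ Set.Ioc p1 p2,
      ((g p).toNNReal : ℝ) * rev F p = ∫ x, Kf p x ∂F := by
    intro p hp
    have hind : (fun x => Kf p x) = Set.indicator (Set.Ici p) (fun _ => g p * p) := by
      ext x
      simp only [hKfdef, Set.indicator_apply, Set.mem_Ici]
    rw [hind, integral_indicator_const _ measurableSet_Ici,
      Real.coe_toNNReal _ (hg0 p hp), rev, smul_eq_mul, measureReal_def]
    ring
  have stepB : ∫ p, ((g p).toNNReal : ℝ) * rev F p ∂μ0 = ∫ p, (∫ x, Kf p x ∂F) ∂μ0 :=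
    integral_congr_ae (ae_restrict_of_forall_mem measurableSet_Ioc hrev)
  -- Step C : Fubini
  have hKmeas : Measurable (Function.uncurry Kf) := by
    have : Function.uncurry Kf =
        Set.indicator {q : ℝ × ℝ | q.1 ≤ q.2} (fun q => g q.1 * q.1) := by
      ext q
      simp only [Function.uncurry, Set.indicator_apply, Set.mem_setOf_eq, hKfdef]
    rw [this]
    exact Measurable.indicator ((hgmeas.comp measurable_fst).mul measurable_fst)
      (measurableSet_le measurable_fst measurable_snd)
  have hKint : Integrable (Function.uncurry Kf) (μ0.prod F) := by
    apply Integrable.mono' (integrable_const M) hKmeas.aestronglyMeasurable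
    have hps : μ0.prod F = (volume.prod F).restrict ((Set.Ioc p1 p2) ×ˢ Set.univ) := by
      rw [← Measure.prod_restrict, Measure.restrict_univ]
    rw [hps]
    apply ae_restrict_of_forall_mem (measurableSet_Ioc.prod MeasurableSet.univ)
    rintro ⟨p, x⟩ ⟨hp, -⟩
    simp only [Function.uncurry, hKfdef]
    by_cases h : p ≤ x
    · rw [if_pos h, Real.norm_eq_abs, abs_of_nonneg
        (mul_nonneg (hg0 p hp) (lt_trans h0 hp.1).le)]
      exact hgpM p hp
    · rw [if_neg h]; simpa using hM0
  have stepC : ∫ p, (∫ x, Kf p x ∂F) ∂μ0 = ∫ x, (∫ p, Kf p x ∂μ0) ∂F :=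
    integral_integral_swap hKint
  -- Step D : pointwise lower bound by quadratic Q
  set Q : ℝ → ℝ := fun x => ((p2-p1)^2 - (x-p2)^2)/(2*C) with hQdef
  have hGQ : ∀ x, Q x ≤ ∫ p, Kf p x ∂μ0 := by
    intro x
    rcases le_or_gt x p1 with hx | hx
    · have hzero : ∀ p ∈ Set.Ioc p1 p2, Kf p x = 0 := by
        intro p hp
        exact if_neg (by linarith [hp.1])
      have : ∫ p, Kf p x ∂μ0 = 0 := by
        rw [hμ0def, integral_congr_ae (ae_restrict_of_forall_mem measurableSet_Ioc hzero)]
        simp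
      rw [this, hQdef]
      apply div_nonpos_of_nonpos_of_nonneg ?_ (by linarith)
      nlinarith
    · set y := min p2 x with hydef
      have hy1 : p1 < y := lt_min h12 hx
      have hy2 : y ≤ p2 := min_le_left _ _
      have hindic : (fun p => Kf p x) = Set.indicator (Set.Iic x) (fun p => g p * p) := by
        ext p
        simp only [hKfdef, Set.indicator_apply, Set.mem_Iic]
      have hval : ∫ p, Kf p x ∂μ0 = ∫ p in Set.Ioc p1 y, g p * p ∂volume := by
        rw [hμ0def, hindic, setIntegral_indicator measurableSet_Iic, Set.Ioc_inter_Iic]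
      have hcongr : ∫ p in Set.Ioc p1 y, g p * p ∂volume
          = ∫ p in Set.Ioc p1 y, (p2 - p)/C ∂volume := by
        apply setIntegral_congr_fun measurableSet_Ioc
        intro p hp
        have hp0 : (0:ℝ) < p := lt_trans h0 hp.1
        simp only [hgdef]
        field_simp
      have hQy : ∫ p, Kf p x ∂μ0 = Q y := by
        rw [hval, hcongr, ← intervalIntegral.integral_of_le hy1.le, aux_ftc2, hQdef]
        field_simp
        ring
      rw [hQy, hQdef]
      have hsq : (y - p2)^2 ≤ (x - p2)^2 := by
        rcases le_total x p2 with h | h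
        · rw [hydef, min_eq_right h]
        · rw [hydef, min_eq_left h]
          simpa using sq_nonneg (x - p2)
      exact (div_le_div_iff_of_pos_right (by linarith)).2 (by linarith)
  -- Step E : integrate Q against F
  have hQrepr : Q = fun x => (-(1/(2*C))) * x^2 + (p2/C) * x
      + (((p2-p1)^2 - p2^2)/(2*C)) := by
    ext x
    rw [hQdef]
    field_simp
    ring
  have hQint : Integrable Q F := by
    rw [hQrepr]
    exact ((hF.int_sq.const_mul _).add (hF.int_mean.const_mul _)).add (integrable_const _)
  have hGint : Integrable (fun x => ∫ p, Kf p x ∂μ0) F := hKint.integral_prod_right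
  have hSle : ∫ x, x^2 ∂F ≤ m^2 + s^2 := by
    have hvar := hF.var_le
    have e0 : ∫ x, (x - m)^2 ∂F = ∫ x, (x^2 + (-(2*m))*x + m^2) ∂F := by
      congr 1; ext x; ring
    have e1 : ∫ x, (x^2 + (-(2*m))*x + m^2) ∂F
        = (∫ x, (x^2 + (-(2*m))*x) ∂F) + ∫ _, (m^2:ℝ) ∂F :=
      integral_add (hF.int_sq.add (hF.int_mean.const_mul _)) (integrable_const _)
    have e2 : ∫ x, (x^2 + (-(2*m))*x) ∂F = (∫ x, x^2 ∂F) + ∫ x, (-(2*m))*x ∂F :=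
      integral_add hF.int_sq (hF.int_mean.const_mul _)
    have e3 : ∫ x, (-(2*m))*x ∂F = (-(2*m)) * m := by
      rw [MeasureTheory.integral_const_mul, hF.mean]
    have e4 : ∫ _, (m^2:ℝ) ∂F = m^2 := by simp
    rw [e0, e1, e2, e3, e4] at hvar
    nlinarith
  have hQF : p1 ≤ ∫ x, Q x ∂F := by
    have e1 : ∫ x, Q x ∂F = (∫ x, ((-(1/(2*C))) * x^2 + (p2/C) * x) ∂F)
        + ∫ _, (((p2-p1)^2 - p2^2)/(2*C) : ℝ) ∂F := by
      rw [hQrepr]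
      exact integral_add ((hF.int_sq.const_mul _).add (hF.int_mean.const_mul _))
        (integrable_const _)
    have e2 : ∫ x, ((-(1/(2*C))) * x^2 + (p2/C) * x) ∂F
        = (∫ x, (-(1/(2*C))) * x^2 ∂F) + ∫ x, (p2/C)*x ∂F :=
      integral_add (hF.int_sq.const_mul _) (hF.int_mean.const_mul _)
    have e2a : ∫ x, (-(1/(2*C))) * x^2 ∂F = (-(1/(2*C))) * ∫ x, x^2 ∂F := by
      rw [MeasureTheory.integral_const_mul]
    have e3 : ∫ x, (p2/C)*x ∂F = (p2/C)*m := by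
      rw [MeasureTheory.integral_const_mul, hF.mean]
    have e4 : ∫ _, (((p2-p1)^2 - p2^2)/(2*C) : ℝ) ∂F = ((p2-p1)^2 - p2^2)/(2*C) := by simp
    have key : (-(1/(2*C))) * (m^2 + s^2) + (p2/C) * m + (((p2-p1)^2 - p2^2)/(2*C)) = p1 := by
      rw [← heq2, ← heq1, hCdef]
      have hCne : p2 * Real.log (p2/p1) - (p2 - p1) ≠ 0 := ne_of_gt hC
      field_simp
      ring
    have hmono : (-(1/(2*C))) * (m^2 + s^2) ≤ (-(1/(2*C))) * (∫ x, x^2 ∂F) := by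
      apply mul_le_mul_of_nonpos_left hSle
      have h2C : 0 < 2*C := by linarith
      simp only [neg_nonpos]
      positivity
    rw [e1, e2, e2a, e3, e4]
    linarith
  calc p1 ≤ ∫ x, Q x ∂F := hQF
    _ ≤ ∫ x, (∫ p, Kf p x ∂μ0) ∂F := integral_mono hQint hGint hGQ
    _ = ∫ p, (∫ x, Kf p x ∂F) ∂μ0 := stepC.symm
    _ = ∫ p, ((g p).toNNReal : ℝ) * rev F p ∂μ0 := stepB.symm
    _ = ∫ p, rev F p ∂(nu p1 p2) := stepA.symm

lemma aux_F_nonneg_ae {F : Measure ℝ} {m s : ℝ} (hF : MeanVarLe F m s) :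
    0 ≤ᵐ[F] fun x : ℝ => x := by
  rw [Filter.EventuallyLE, ae_iff]
  apply measure_mono_null _ hF.supp
  intro x hx
  simp only [Set.mem_setOf_eq, Pi.zero_apply] at hx
  simpa [Set.mem_Iio] using lt_of_not_ge hx

lemma aux_opt_le {F : Measure ℝ} {m s : ℝ} (hF : MeanVarLe F m s) (hm : 0 < m) :
    opt F ≤ m := by
  rw [opt]
  apply Real.iSup_le _ hm.le
  intro p
  apply Real.iSup_le _ hm.le
  intro _
  have h := mul_meas_ge_le_integral_of_nonneg (aux_F_nonneg_ae hF) hF.int_mean p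
  rw [hF.mean] at h
  exact h

lemma aux_var_sq_int {F : Measure ℝ} {m s : ℝ} (hF : MeanVarLe F m s) :
    Integrable (fun x => (x - m)^2) F := by
  have hrepr : (fun x : ℝ => (x - m)^2) = fun x => x^2 + (-(2*m))*x + m^2 := by
    ext x; ring
  haveI := hF.prob
  rw [hrepr]
  exact (hF.int_sq.add (hF.int_mean.const_mul _)).add (integrable_const _)

/-- Degenerate case: point mass. -/
lemma aux_mrev_ge_diag {p1 : ℝ} (h0 : 0 < p1) {s : ℝ}
    (hs : s^2 = 0) {A : Measure ℝ} (hprob : IsProbabilityMeasure A)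
    (hsupp : A (Set.Icc p1 p1) = 1)
    (F : Measure ℝ) (hF : MeanVarLe F p1 s) :
    p1 ≤ mrev A F := by
  haveI := hprob
  haveI := hF.prob
  have hAone : A {p1} = 1 := by simpa [Set.Icc_self] using hsupp
  have hAcompl : A ({p1}ᶜ) = 0 :=
    (prob_compl_eq_zero_iff (measurableSet_singleton p1)).2 hAone
  have hae : ∀ᵐ p ∂A, rev F p = rev F p1 := by
    rw [ae_iff]
    apply measure_mono_null _ hAcompl
    intro p hp
    simp only [Set.mem_setOf_eq] at hp
    simp only [Set.mem_compl_iff, Set.mem_singleton_iff]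
    intro h
    exact hp (h ▸ rfl)
  have hmrev : mrev A F = rev F p1 := by
    rw [mrev, integral_congr_ae hae, MeasureTheory.integral_const, probReal_univ]
    simp
  have hz : ∫ x, (x - p1)^2 ∂F = 0 :=
    le_antisymm (by linarith [hF.var_le]) (integral_nonneg fun x => sq_nonneg _)
  have hae0 := (integral_eq_zero_iff_of_nonneg (fun x => sq_nonneg _) (aux_var_sq_int hF)).1 hz
  rw [Filter.EventuallyEq, ae_iff] at hae0
  have hIio : F (Set.Iio p1) = 0 := by
    apply measure_mono_null _ hae0
    intro x hx
    simp only [Set.mem_setOf_eq, Pi.zero_apply]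
    have : x - p1 ≠ 0 := sub_ne_zero.2 (ne_of_lt hx)
    exact pow_ne_zero 2 this
  have hIci : F (Set.Ici p1) = 1 := by
    rw [← Set.compl_Iio]
    exact (prob_compl_eq_one_iff measurableSet_Iio).2 hIio
  rw [hmrev, rev, hIci]
  simp

/-- Let `μ > 0`, `σ ≥ 0`, `r = σ/μ`, `ρ` the unique solution in `[1,∞)` of
`(2e^{ρ−1}−1)/ρ² = r² + 1`, and `(π₁,π₂)` with `0 < π₁ ≤ π₂` the unique solution of
`π₁(1 + ln(π₂/π₁)) = μ`, `π₁(2π₂ − π₁) = μ² + σ²`. Then `π₁ = μ/ρ`, and the log-lottery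
guarantees `REV(P^log_{μ,σ};F) ≥ μ/ρ` and `OPT(F) ≤ ρ·REV(P^log_{μ,σ};F)` for every
`F ∈ 𝔽_{μ,σ}`. -/
theorem stmt7 (μ σ : ℝ) (hμ : 0 < μ) (hσ : 0 ≤ σ) (r : ℝ) (hr : r = σ / μ)
    (ρ : ℝ) (hρ1 : 1 ≤ ρ) (hρ2 : (2 * Real.exp (ρ - 1) - 1) / ρ ^ 2 = r ^ 2 + 1)
    (p1 p2 : ℝ) (hp1 : 0 < p1) (hp12 : p1 ≤ p2)
    (heq1 : p1 * (1 + Real.log (p2 / p1)) = μ)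
    (heq2 : p1 * (2 * p2 - p1) = μ ^ 2 + σ ^ 2) :
    p1 = μ / ρ ∧
    ∀ A : Measure ℝ, IsLogLottery A p1 p2 → ∀ F : Measure ℝ, MeanVarLe F μ σ →
      μ / ρ ≤ mrev A F ∧ opt F ≤ ρ * mrev A F := by
  have hp2 : 0 < p2 := lt_of_lt_of_le hp1 hp12
  have hL0 : 0 ≤ Real.log (p2/p1) := Real.log_nonneg ((one_le_div hp1).2 hp12)
  have hρ' : μ/p1 = 1 + Real.log (p2/p1) := by
    rw [← heq1]
    field_simp
  have hρ'1 : 1 ≤ μ/p1 := by rw [hρ']; linarith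
  have hexp : Real.exp (μ/p1 - 1) = p2/p1 := by
    rw [hρ']
    have h : 1 + Real.log (p2/p1) - 1 = Real.log (p2/p1) := by ring
    rw [h, Real.exp_log (div_pos hp2 hp1)]
  have h2 : 2*p2*p1 - p1^2 = μ^2 + σ^2 := by linear_combination heq2
  have hg' : (2 * Real.exp (μ/p1 - 1) - 1) / (μ/p1) ^ 2 = r ^ 2 + 1 := by
    rw [hexp, hr]
    field_simp
    linear_combination h2
  have hρval : ρ = μ/p1 := aux_g_inj hρ1 hρ'1 (by rw [hρ2, hg'])
  have part1 : p1 = μ/ρ := by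
    rw [hρval]
    field_simp
  refine ⟨part1, ?_⟩
  intro A hA F hF
  have hple : p1 ≤ mrev A F := by
    rcases eq_or_lt_of_le hp12 with heqp | hlt
    · subst heqp
      have hμp : p1 = μ := by
        rw [div_self (ne_of_gt hp1), Real.log_one] at heq1
        simpa using heq1
      have hσ2 : σ^2 = 0 := by nlinarith
      exact aux_mrev_ge_diag hp1 hσ2 hA.prob hA.supp F (hμp ▸ hF)
    · rw [mrev, aux_A_eq_nu hp1 hlt hA.prob hA.supp hA.cdf]
      exact aux_mrev_ge hp1 hlt heq1 heq2 F hF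
  have h1 : μ/ρ ≤ mrev A F := part1 ▸ hple
  refine ⟨h1, ?_⟩
  have hρ0 : 0 < ρ := lt_of_lt_of_le one_pos hρ1
  calc opt F ≤ μ := aux_opt_le hF hμ
    _ = ρ * (μ/ρ) := by field_simp
    _ ≤ ρ * mrev A F := mul_le_mul_of_nonneg_left h1 hρ0.le
end

section
/- For every ε > 0 there exists r₀ > 0 such that for all r ≥ r₀, the unique positive solution ρ(r) of (2e^{ρ−1}−1)/ρ² = r² + 1 satisfies ρ(r) ≤ 1 + (1+ε)·ln(1+r²). -/
lemma log_le_two_sqrt {x : ℝ} (hx : 0 ≤ x) : Real.log x ≤ 2 * Real.sqrt x := by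
  rcases eq_or_lt_of_le hx with h | h
  · simp [← h]
  · have hs : 0 < Real.sqrt x := Real.sqrt_pos.2 h
    have h1 : Real.log (Real.sqrt x) ≤ Real.sqrt x - 1 :=
      Real.log_le_sub_one_of_pos hs
    have h2 : Real.log (Real.sqrt x) = Real.log x / 2 := Real.log_sqrt hx
    nlinarith

/-- For every `ε > 0` there is `r₀ > 0` such that for all `r ≥ r₀`,
the unique positive solution `ρ(r)` of `(2e^{ρ−1}−1)/ρ² = r² + 1` satisfies
`ρ(r) ≤ 1 + (1+ε)·ln(1+r²)`. -/
theorem stmt8 (ε : ℝ) (hε : 0 < ε) :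
    ∃ r₀ : ℝ, 0 < r₀ ∧ ∀ r : ℝ, r₀ ≤ r →
      ∀ ρ : ℝ, 1 ≤ ρ → (2 * Real.exp (ρ - 1) - 1) / ρ ^ 2 = r ^ 2 + 1 →
        ρ ≤ 1 + (1 + ε) * Real.log (1 + r ^ 2) := by
  obtain ⟨C, hCdef⟩ : ∃ C : ℝ, C = 63 + 64 / ε ^ 2 := ⟨_, rfl⟩
  have hd : 0 < 64 / ε ^ 2 := by positivity
  have hC63 : (63 : ℝ) ≤ C := by rw [hCdef]; linarith
  have hCpos : 0 < C := by linarith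
  refine ⟨Real.exp C, Real.exp_pos C, ?_⟩
  intro r hr ρ hρ heq
  have hr1 : 1 ≤ r := le_trans (by linarith [Real.add_one_le_exp C]) hr
  set L := Real.log (1 + r ^ 2) with hLdef
  have hCL : C ≤ L := by
    have h1 : Real.exp C ≤ 1 + r ^ 2 := by nlinarith
    calc C = Real.log (Real.exp C) := (Real.log_exp C).symm
      _ ≤ L := Real.log_le_log (Real.exp_pos C) h1
  have hL63 : (63 : ℝ) ≤ L := le_trans hC63 hCL
  have hLeps : 64 / ε ^ 2 ≤ L := by rw [hCdef] at hCL; linarith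
  have hρpos : (0 : ℝ) < ρ := by linarith
  have hρ2 : (0 : ℝ) < ρ ^ 2 := by positivity
  have heq' : 2 * Real.exp (ρ - 1) - 1 = (r ^ 2 + 1) * ρ ^ 2 := by
    rw [div_eq_iff (ne_of_gt hρ2)] at heq
    linarith
  have hexp1 : 1 ≤ Real.exp (ρ - 1) := Real.one_le_exp (by linarith)
  have hkey : Real.exp (ρ - 1) ≤ (r ^ 2 + 1) * ρ ^ 2 := by linarith
  have hmain : ρ - 1 ≤ L + 2 * Real.log ρ := by
    have h1 : ρ - 1 ≤ Real.log ((r ^ 2 + 1) * ρ ^ 2) := by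
      calc ρ - 1 = Real.log (Real.exp (ρ - 1)) := (Real.log_exp _).symm
        _ ≤ Real.log ((r ^ 2 + 1) * ρ ^ 2) :=
            Real.log_le_log (Real.exp_pos _) hkey
    have h2 : Real.log ((r ^ 2 + 1) * ρ ^ 2)
        = Real.log (r ^ 2 + 1) + Real.log (ρ ^ 2) := by
      rw [Real.log_mul (by positivity) (ne_of_gt hρ2)]
    have h3 : Real.log (ρ ^ 2) = 2 * Real.log ρ := by
      rw [Real.log_pow]; push_cast; ring
    have h4 : Real.log (r ^ 2 + 1) = L := by rw [hLdef, add_comm]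
    rw [h2, h3, h4] at h1
    exact h1
  rcases le_or_gt ρ 64 with hcase | hcase
  · have hεL : 0 ≤ ε * L := by positivity
    nlinarith
  · -- large ρ
    have hsρ8 : (8 : ℝ) ≤ Real.sqrt ρ := by
      have h64 : Real.sqrt 64 ≤ Real.sqrt ρ := Real.sqrt_le_sqrt (by linarith)
      have : Real.sqrt 64 = 8 := by
        rw [show (64 : ℝ) = 8 ^ 2 by norm_num, Real.sqrt_sq (by norm_num)]
      linarith
    have hsq : Real.sqrt ρ ^ 2 = ρ := Real.sq_sqrt (le_of_lt hρpos)
    have hlogρ : Real.log ρ ≤ 2 * Real.sqrt ρ := log_le_two_sqrt (le_of_lt hρpos)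
    have h4s : 4 * Real.sqrt ρ ≤ ρ / 2 := by
      nlinarith [mul_nonneg (sub_nonneg.2 hsρ8) (Real.sqrt_nonneg ρ)]
    have hρ4L : ρ ≤ 4 * L := by linarith
    have hLpos : (0 : ℝ) < L := by linarith
    have hlog2 : Real.log ρ ≤ 2 * Real.sqrt (4 * L) := by
      calc Real.log ρ ≤ Real.log (4 * L) := Real.log_le_log hρpos hρ4L
        _ ≤ 2 * Real.sqrt (4 * L) := log_le_two_sqrt (by positivity)
    have hs4L : Real.sqrt (4 * L) = 2 * Real.sqrt L := by
      rw [Real.sqrt_mul (by norm_num : (0:ℝ) ≤ 4),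
        show (4 : ℝ) = 2 ^ 2 by norm_num, Real.sqrt_sq (by norm_num)]
    have hsL : 8 / ε ≤ Real.sqrt L := by
      rw [show (8 : ℝ) / ε = Real.sqrt ((8 / ε) ^ 2) by
        rw [Real.sqrt_sq (by positivity)]]
      apply Real.sqrt_le_sqrt
      calc (8 / ε) ^ 2 = 64 / ε ^ 2 := by ring
        _ ≤ L := hLeps
    have hsqL : Real.sqrt L ^ 2 = L := Real.sq_sqrt (le_of_lt hLpos)
    have h8L : 8 * Real.sqrt L ≤ ε * L := by
      have hεs : 8 ≤ ε * Real.sqrt L := by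
        have h := mul_le_mul_of_nonneg_left hsL (le_of_lt hε)
        calc (8 : ℝ) = ε * (8 / ε) := by field_simp
          _ ≤ ε * Real.sqrt L := h
      nlinarith [mul_nonneg (sub_nonneg.2 hεs) (Real.sqrt_nonneg L)]
    rw [hs4L] at hlog2
    linarith
end
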